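/- arXiv:math/0204300 — 4 statements merged into one kernel-verified Lean document; each statement's English description precedes it below -/
import Mathlib

section
/- Let L : Λ → ℂ be a hermitian linear functional and let (f_n)_{n≥0} be a sequence in Λ. Define polynomials p_{2n}(z) := z^n f_{2n*}(z) (where f_{2n*} is the substar conjugate of f_{2n}) and p_{2n+1}(z) := z^n f_{2n+1}(z) for n ≥ 0. Then (f_n)_{n≥0} is a sequence of right orthogonal Laurent polynomials with respect to L if and only if (p_n)_{n≥0} is a sequence of orthogonal polynomials with respect to L; moreover (f_n)_{n≥0} is orthonormal if and only if (p_n)_{n≥0} is orthonormal. -/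
open LaurentPolynomial Polynomial Complex ComplexConjugate

noncomputable section

/-- Substar conjugate of a Laurent polynomial: f_*(z) = Σ conj(c_k) z^{-k}. -/
def substar (f : LaurentPolynomial ℂ) : LaurentPolynomial ℂ :=
  AddMonoidAlgebra.ofCoeff
    (Finsupp.mapRange (starRingEnd ℂ) (map_zero _) (LaurentPolynomial.invert f).coeff)

/-- Hermitian linear functional on Laurent polynomials. -/
def IsHermitianL (L : LaurentPolynomial ℂ →ₗ[ℂ] ℂ) : Prop :=
  ∀ n : ℕ, L (T (-(n : ℤ))) = conj (L (T (n : ℤ)))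

/-- The sesquilinear form induced by `L`: (f,g)_L := L (f g_*). -/
def sesq (L : LaurentPolynomial ℂ →ₗ[ℂ] ℂ) (f g : LaurentPolynomial ℂ) : ℂ :=
  L (f * substar g)

/-- Λ_{m,n} = span {z^m, …, z^n}. -/
def lamBox (m n : ℤ) : Submodule ℂ (LaurentPolynomial ℂ) :=
  Submodule.span ℂ ((fun k : ℤ => (T k : LaurentPolynomial ℂ)) '' Set.Icc m n)

/-- Λ_n^+  (Λ_{2n}^+ = Λ_{-n,n}, Λ_{2n+1}^+ = Λ_{-n,n+1}). -/
def lamPlus (n : ℕ) : Submodule ℂ (LaurentPolynomial ℂ) :=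
  lamBox (-((n / 2 : ℕ) : ℤ)) (((n + 1) / 2 : ℕ) : ℤ)

/-- Λ_n^-  (Λ_{2n}^- = Λ_{-n,n}, Λ_{2n+1}^- = Λ_{-n-1,n}). -/
def lamMinus (n : ℕ) : Submodule ℂ (LaurentPolynomial ℂ) :=
  lamBox (-(((n + 1) / 2 : ℕ) : ℤ)) ((n / 2 : ℕ) : ℤ)

/-- (f_n) is a sequence of right orthogonal Laurent polynomials w.r.t. L. -/
def IsRightOLP (L : LaurentPolynomial ℂ →ₗ[ℂ] ℂ) (f : ℕ → LaurentPolynomial ℂ) : Prop :=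
  (∀ n, f n ∈ lamPlus n) ∧ f 0 ≠ 0 ∧ (∀ n, f (n + 1) ∉ lamPlus n) ∧
    (∀ n m, n ≠ m → sesq L (f n) (f m) = 0) ∧ (∀ n, sesq L (f n) (f n) ≠ 0)

/-- (f_n) is a sequence of left orthogonal Laurent polynomials w.r.t. L. -/
def IsLeftOLP (L : LaurentPolynomial ℂ →ₗ[ℂ] ℂ) (f : ℕ → LaurentPolynomial ℂ) : Prop :=
  (∀ n, f n ∈ lamMinus n) ∧ f 0 ≠ 0 ∧ (∀ n, f (n + 1) ∉ lamMinus n) ∧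
    (∀ n m, n ≠ m → sesq L (f n) (f m) = 0) ∧ (∀ n, sesq L (f n) (f n) ≠ 0)

/-- Right orthonormal Laurent polynomials. -/
def IsRightOnLP (L : LaurentPolynomial ℂ →ₗ[ℂ] ℂ) (f : ℕ → LaurentPolynomial ℂ) : Prop :=
  IsRightOLP L f ∧ ∀ n, sesq L (f n) (f n) = 1 ∨ sesq L (f n) (f n) = -1

/-- Left orthonormal Laurent polynomials. -/
def IsLeftOnLP (L : LaurentPolynomial ℂ →ₗ[ℂ] ℂ) (f : ℕ → LaurentPolynomial ℂ) : Prop :=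
  IsLeftOLP L f ∧ ∀ n, sesq L (f n) (f n) = 1 ∨ sesq L (f n) (f n) = -1

/-- (p_n) is a sequence of orthogonal polynomials w.r.t. L: p_n has exact degree n
(i.e. p_n ∈ span{1,…,z^n} \ span{1,…,z^{n-1}}, viewed inside Λ) and
(p_n, p_m)_L = ℓ_n δ_{n,m} with ℓ_n ≠ 0. -/
def IsOPS (L : LaurentPolynomial ℂ →ₗ[ℂ] ℂ) (p : ℕ → LaurentPolynomial ℂ) : Prop :=
  (∀ n : ℕ, p n ∈ lamBox 0 (n : ℤ)) ∧ p 0 ≠ 0 ∧ (∀ n : ℕ, p (n + 1) ∉ lamBox 0 (n : ℤ)) ∧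
    (∀ n m, n ≠ m → sesq L (p n) (p m) = 0) ∧ (∀ n, sesq L (p n) (p n) ≠ 0)

/-- Orthonormal polynomial sequence. -/
def IsOnPS (L : LaurentPolynomial ℂ →ₗ[ℂ] ℂ) (p : ℕ → LaurentPolynomial ℂ) : Prop :=
  IsOPS L p ∧ ∀ n, sesq L (p n) (p n) = 1 ∨ sesq L (p n) (p n) = -1

/-! ### Auxiliary lemmas -/

lemma substar_apply (f : LaurentPolynomial ℂ) (n : ℤ) : (substar f).coeff n = conj (f.coeff (-n)) := by
  simp [substar]

lemma substar_single (k : ℤ) (c : ℂ) :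
    substar (AddMonoidAlgebra.single k c) = AddMonoidAlgebra.single (-k) (conj c) := by
  ext n
  rw [substar_apply]
  simp only [AddMonoidAlgebra.coeff_single, Finsupp.single_apply]
  rcases eq_or_ne k (-n) with h | h
  · subst h; simp
  · rw [if_neg h, if_neg (by omega), map_zero]

lemma substar_T (k : ℤ) : substar (T k) = T (-k) := by
  rw [T, substar_single, map_one, T]

lemma substar_add (x y : LaurentPolynomial ℂ) : substar (x + y) = substar x + substar y := by
  ext n
  simp [substar_apply, map_add]

lemma substar_zero : substar 0 = 0 := by
  unfold substar; simp

lemma substar_smul (c : ℂ) (x : LaurentPolynomial ℂ) :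
    substar (c • x) = conj c • substar x := by
  ext n
  rw [substar_apply, AddMonoidAlgebra.coeff_smul, Finsupp.smul_apply, AddMonoidAlgebra.coeff_smul,
    Finsupp.smul_apply, substar_apply,
    smul_eq_mul, smul_eq_mul, map_mul]

lemma substar_mul (x y : LaurentPolynomial ℂ) : substar (x * y) = substar x * substar y := by
  induction x using AddMonoidAlgebra.induction_linear with
  | zero => simp [substar_zero]
  | add a b ha hb => rw [add_mul, substar_add, substar_add, ha, hb, add_mul]
  | single a c =>
    induction y using AddMonoidAlgebra.induction_linear with
    | zero => simp [substar_zero]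
    | add a b ha hb => rw [mul_add, substar_add, substar_add, ha, hb, mul_add]
    | single b d =>
      rw [AddMonoidAlgebra.single_mul_single, substar_single, substar_single, substar_single,
        AddMonoidAlgebra.single_mul_single, map_mul, neg_add]

lemma substar_substar (x : LaurentPolynomial ℂ) : substar (substar x) = x := by
  ext n; rw [substar_apply, substar_apply]; simp

lemma single_eq_smul_T (k : ℤ) (c : ℂ) : (AddMonoidAlgebra.single k c : LaurentPolynomial ℂ) = c • T k := by
  rw [T, AddMonoidAlgebra.smul_single, smul_eq_mul, mul_one]

lemma hermL_T (L : LaurentPolynomial ℂ →ₗ[ℂ] ℂ) (hL : IsHermitianL L) (k : ℤ) :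
    L (T (-k)) = conj (L (T k)) := by
  obtain ⟨n, rfl | rfl⟩ := Int.eq_nat_or_neg k
  · exact hL n
  · rw [neg_neg, hL n]; simp

lemma hermL_substar (L : LaurentPolynomial ℂ →ₗ[ℂ] ℂ) (hL : IsHermitianL L)
    (x : LaurentPolynomial ℂ) : L (substar x) = conj (L x) := by
  induction x using AddMonoidAlgebra.induction_linear with
  | zero => simp [substar_zero]
  | add a b ha hb => rw [substar_add, map_add, map_add, ha, hb, map_add]
  | single k c =>
    rw [substar_single, single_eq_smul_T, single_eq_smul_T, map_smul, map_smul,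
      smul_eq_mul, smul_eq_mul, map_mul, hermL_T L hL]

lemma sesq_conj_symm (L : LaurentPolynomial ℂ →ₗ[ℂ] ℂ) (hL : IsHermitianL L)
    (x y : LaurentPolynomial ℂ) : sesq L x y = conj (sesq L y x) := by
  unfold sesq
  rw [← hermL_substar L hL, substar_mul, substar_substar, mul_comm]

lemma sesq_shift (L : LaurentPolynomial ℂ →ₗ[ℂ] ℂ) (k : ℤ) (x y : LaurentPolynomial ℂ) :
    sesq L (T k * x) (T k * y) = sesq L x y := by
  unfold sesq
  rw [substar_mul, substar_T]
  congr 1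
  calc T k * x * (T (-k) * substar y) = (T k * T (-k)) * (x * substar y) := by ring
  _ = x * substar y := by rw [← T_add, add_neg_cancel, T_zero, one_mul]

lemma sesq_substar (L : LaurentPolynomial ℂ →ₗ[ℂ] ℂ) (hL : IsHermitianL L)
    (x y : LaurentPolynomial ℂ) : sesq L (substar x) (substar y) = conj (sesq L x y) := by
  unfold sesq
  rw [substar_substar, ← hermL_substar L hL, substar_mul, substar_substar, mul_comm]

lemma sesq_zero_right (L : LaurentPolynomial ℂ →ₗ[ℂ] ℂ) (x : LaurentPolynomial ℂ) :
    sesq L x 0 = 0 := by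
  unfold sesq; rw [substar_zero, mul_zero, map_zero]

lemma sesq_add_right (L : LaurentPolynomial ℂ →ₗ[ℂ] ℂ) (x y z : LaurentPolynomial ℂ) :
    sesq L x (y + z) = sesq L x y + sesq L x z := by
  unfold sesq; rw [substar_add, mul_add, map_add]

lemma sesq_smul_right (L : LaurentPolynomial ℂ →ₗ[ℂ] ℂ) (c : ℂ) (x y : LaurentPolynomial ℂ) :
    sesq L x (c • y) = conj c * sesq L x y := by
  unfold sesq; rw [substar_smul, mul_smul_comm, map_smul, smul_eq_mul]

/-! ### lamBox lemmas -/

lemma linearIndependent_T : LinearIndependent ℂ (fun k : ℤ => (T k : LaurentPolynomial ℂ)) :=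
  (Finsupp.basisSingleOne.map (AddMonoidAlgebra.coeffLinearEquiv ℂ).symm).linearIndependent

lemma T_mem_lamBox {a b k : ℤ} (h : k ∈ Set.Icc a b) : (T k : LaurentPolynomial ℂ) ∈ lamBox a b :=
  Submodule.subset_span ⟨k, h, rfl⟩

lemma lamBox_mono {a b a' b' : ℤ} (ha : a' ≤ a) (hb : b ≤ b') : lamBox a b ≤ lamBox a' b' :=
  Submodule.span_mono (Set.image_mono (Set.Icc_subset_Icc ha hb))

lemma T_mul_mem_lamBox {a b k : ℤ} {x : LaurentPolynomial ℂ} (h : x ∈ lamBox a b) :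
    T k * x ∈ lamBox (a + k) (b + k) := by
  induction h using Submodule.span_induction with
  | mem y hy =>
    obtain ⟨j, hj, rfl⟩ := hy
    rw [Set.mem_Icc] at hj
    rw [← T_add]
    exact T_mem_lamBox ⟨by omega, by omega⟩
  | zero => simp
  | add y z hy hz hy' hz' => rw [mul_add]; exact add_mem hy' hz'
  | smul c y hy hy' => rw [mul_smul_comm]; exact Submodule.smul_mem _ _ hy'

lemma T_mul_mem_lamBox_iff {a b k c d : ℤ} (h1 : c = a + k) (h2 : d = b + k)
    {x : LaurentPolynomial ℂ} : T k * x ∈ lamBox c d ↔ x ∈ lamBox a b := by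
  subst h1; subst h2
  refine ⟨fun h => ?_, T_mul_mem_lamBox⟩
  have h2 := T_mul_mem_lamBox (k := -k) h
  have hx : T (-k) * (T k * x) = x := by
    rw [← mul_assoc, ← T_add, neg_add_cancel, T_zero, one_mul]
  rw [hx] at h2
  simpa using h2

lemma substar_mem_lamBox {a b : ℤ} {x : LaurentPolynomial ℂ} (h : x ∈ lamBox a b) :
    substar x ∈ lamBox (-b) (-a) := by
  induction h using Submodule.span_induction with
  | mem y hy =>
    obtain ⟨j, hj, rfl⟩ := hy
    rw [Set.mem_Icc] at hj
    rw [substar_T]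
    exact T_mem_lamBox ⟨by omega, by omega⟩
  | zero => rw [substar_zero]; simp
  | add y z hy hz hy' hz' => rw [substar_add]; exact add_mem hy' hz'
  | smul c y hy hy' => rw [substar_smul]; exact Submodule.smul_mem _ _ hy'

lemma substar_mem_lamBox_iff {a b c d : ℤ} (h1 : c = -b) (h2 : d = -a)
    {x : LaurentPolynomial ℂ} : substar x ∈ lamBox c d ↔ x ∈ lamBox a b := by
  subst h1; subst h2
  refine ⟨fun h => ?_, substar_mem_lamBox⟩
  have h2 := substar_mem_lamBox h
  rw [substar_substar, neg_neg, neg_neg] at h2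
  exact h2

instance lamBox_fd (a b : ℤ) : FiniteDimensional ℂ (lamBox a b) := by
  apply FiniteDimensional.span_of_finite
  exact Set.Finite.image _ (Set.finite_Icc a b)

lemma finrank_lamBox (a b : ℤ) :
    Module.finrank ℂ (lamBox a b) = (b + 1 - a).toNat := by
  classical
  have hli : LinearIndependent ℂ (fun k : (Set.Icc a b) => (T (k : ℤ) : LaurentPolynomial ℂ)) :=
    linearIndependent_T.comp _ Subtype.val_injective
  have hsp : lamBox a b
      = Submodule.span ℂ (Set.range (fun k : (Set.Icc a b) => (T (k : ℤ) : LaurentPolynomial ℂ))) := by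
    unfold lamBox
    rw [← Set.image_eq_range]
  rw [hsp, finrank_span_eq_card hli]
  simp [Int.card_Icc]

instance lamPlus_fd (n : ℕ) : FiniteDimensional ℂ (lamPlus n) := lamBox_fd _ _

lemma finrank_lamPlus (n : ℕ) : Module.finrank ℂ (lamPlus n) = n + 1 := by
  unfold lamPlus
  rw [finrank_lamBox]
  omega

lemma lamPlus_mono : Monotone lamPlus := by
  apply monotone_nat_of_le_succ
  intro n
  unfold lamPlus
  apply lamBox_mono <;> omega

lemma finrank_lamBoxN (n : ℕ) : Module.finrank ℂ (lamBox 0 (n : ℤ)) = n + 1 := by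
  rw [finrank_lamBox]; omega

lemma lamBoxN_mono : Monotone (fun n : ℕ => lamBox 0 (n : ℤ)) := by
  apply monotone_nat_of_le_succ
  intro n
  apply lamBox_mono <;> omega

lemma lamPlus_even (a : ℕ) : lamPlus (2 * a) = lamBox (-(a : ℤ)) (a : ℤ) := by
  have e1 : (2 * a) / 2 = a := by omega
  have e2 : (2 * a + 1) / 2 = a := by omega
  unfold lamPlus
  rw [e1, e2]

lemma lamPlus_odd (a : ℕ) : lamPlus (2 * a + 1) = lamBox (-(a : ℤ)) ((a : ℤ) + 1) := by
  have e1 : (2 * a + 1) / 2 = a := by omega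
  have e2 : (2 * a + 1 + 1) / 2 = a + 1 := by omega
  unfold lamPlus
  rw [e1, e2]
  push_cast
  ring_nf

/-! ### Flag lemmas -/

lemma flag_span (V : ℕ → Submodule ℂ (LaurentPolynomial ℂ))
    (hfd : ∀ n, FiniteDimensional ℂ (V n))
    (hdim : ∀ n, Module.finrank ℂ (V n) = n + 1)
    (hmono : Monotone V)
    (f : ℕ → LaurentPolynomial ℂ)
    (hmem : ∀ n, f n ∈ V n) (h0 : f 0 ≠ 0) (hnot : ∀ n, f (n + 1) ∉ V n) :
    ∀ n, Submodule.span ℂ (f '' Set.Iic n) = V n := by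
  intro n
  induction n with
  | zero =>
    have himg : f '' Set.Iic 0 = {f 0} := by
      ext x; simp [Nat.le_zero, eq_comm]
    haveI := hfd 0
    rw [himg]
    refine Submodule.eq_of_le_of_finrank_le ?_ ?_
    · rw [Submodule.span_le, Set.singleton_subset_iff]; exact hmem 0
    · rw [hdim 0, finrank_span_singleton h0]
  | succ n ih =>
    haveI := hfd (n + 1)
    have hle : Submodule.span ℂ (f '' Set.Iic (n + 1)) ≤ V (n + 1) := by
      rw [Submodule.span_le]
      rintro - ⟨k, hk, rfl⟩
      exact hmono (Set.mem_Iic.mp hk) (hmem k)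
    haveI : FiniteDimensional ℂ (Submodule.span ℂ (f '' Set.Iic (n + 1))) :=
      Submodule.finiteDimensional_of_le hle
    refine Submodule.eq_of_le_of_finrank_le hle ?_
    have hlt : V n < Submodule.span ℂ (f '' Set.Iic (n + 1)) := by
      rw [← ih]
      constructor
      · exact Submodule.span_mono (Set.image_mono (Set.Iic_subset_Iic.mpr (by omega)))
      · intro hcon
        exact hnot n (ih ▸ hcon (Submodule.subset_span ⟨n + 1, Set.mem_Iic.mpr le_rfl, rfl⟩))
    have := Submodule.finrank_lt_finrank_of_lt hlt
    rw [hdim n] at this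
    rw [hdim (n + 1)]
    omega

lemma orth_iff_flag (L : LaurentPolynomial ℂ →ₗ[ℂ] ℂ) (hL : IsHermitianL L)
    (V : ℕ → Submodule ℂ (LaurentPolynomial ℂ))
    (hfd : ∀ n, FiniteDimensional ℂ (V n))
    (hdim : ∀ n, Module.finrank ℂ (V n) = n + 1)
    (hmono : Monotone V)
    (f : ℕ → LaurentPolynomial ℂ)
    (hmem : ∀ n, f n ∈ V n) (h0 : f 0 ≠ 0) (hnot : ∀ n, f (n + 1) ∉ V n) :
    (∀ n m, n ≠ m → sesq L (f n) (f m) = 0) ↔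
      (∀ n, ∀ g ∈ V n, sesq L (f (n + 1)) g = 0) := by
  constructor
  · intro h n g hg
    rw [← flag_span V hfd hdim hmono f hmem h0 hnot n] at hg
    induction hg using Submodule.span_induction with
    | mem y hy =>
      obtain ⟨k, hk, rfl⟩ := hy
      exact h _ _ (by rw [Set.mem_Iic] at hk; omega)
    | zero => exact sesq_zero_right L _
    | add y z hy hz hy' hz' => rw [sesq_add_right, hy', hz', add_zero]
    | smul c y hy hy' => rw [sesq_smul_right, hy', mul_zero]
  · intro h
    have key : ∀ n m, m < n → sesq L (f n) (f m) = 0 := by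
      intro n m hmn
      obtain ⟨k, rfl⟩ : ∃ k, n = k + 1 := ⟨n - 1, by omega⟩
      exact h k (f m) (hmono (by omega) (hmem m))
    intro n m hnm
    rcases lt_or_gt_of_ne hnm with hlt | hlt
    · rw [sesq_conj_symm L hL, key m n hlt, map_zero]
    · exact key n m hlt

/-! ### Transfer lemmas -/

lemma T_mul_cancel (k : ℤ) (x : LaurentPolynomial ℂ) :
    T (-k) * (T k * x) = x := by
  rw [← mul_assoc, ← T_add, neg_add_cancel, T_zero, one_mul]

section Transfer

variable (L : LaurentPolynomial ℂ →ₗ[ℂ] ℂ) (hL : IsHermitianL L)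
  (f p : ℕ → LaurentPolynomial ℂ)
  (hp : ∀ n : ℕ, p (2 * n) = T (n : ℤ) * substar (f (2 * n)) ∧
      p (2 * n + 1) = T (n : ℤ) * f (2 * n + 1))

include hp

lemma hp_odd_succ (a : ℕ) :
    p (2 * a + 1 + 1) = T ((a : ℤ) + 1) * substar (f (2 * a + 1 + 1)) := by
  have h := (hp (a + 1)).1
  rw [show 2 * (a + 1) = 2 * a + 1 + 1 from by ring] at h
  rw [h]
  push_cast
  ring_nf

lemma zero_transfer : p 0 ≠ 0 ↔ f 0 ≠ 0 := by
  have h0 := (hp 0).1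
  rw [show (2 * 0 : ℕ) = 0 from rfl, Nat.cast_zero] at h0
  apply not_congr
  constructor
  · intro hp0
    rw [hp0] at h0
    have h1 := congrArg (fun x => T (-(0:ℤ)) * x) h0.symm
    simp only [T_mul_cancel, mul_zero] at h1
    rw [← substar_substar (f 0), h1, substar_zero]
  · intro hf0
    rw [h0, hf0, substar_zero, mul_zero]

lemma mem_transfer (n : ℕ) : p n ∈ lamBox 0 (n : ℤ) ↔ f n ∈ lamPlus n := by
  rcases Nat.even_or_odd n with ⟨a, rfl⟩ | ⟨a, rfl⟩
  · rw [show a + a = 2 * a from by ring]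
    rw [(hp a).1, lamPlus_even]
    rw [T_mul_mem_lamBox_iff (a := -(a:ℤ)) (b := (a:ℤ)) (by ring) (by push_cast; ring)]
    exact substar_mem_lamBox_iff (by ring) (by ring)
  · rw [(hp a).2, lamPlus_odd]
    exact T_mul_mem_lamBox_iff (a := -(a:ℤ)) (b := (a:ℤ) + 1) (by ring) (by push_cast; ring)

lemma mem_transfer' (n : ℕ) : p (n + 1) ∈ lamBox 0 (n : ℤ) ↔ f (n + 1) ∈ lamPlus n := by
  rcases Nat.even_or_odd n with ⟨a, rfl⟩ | ⟨a, rfl⟩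
  · rw [show a + a = 2 * a from by ring]
    rw [(hp a).2, lamPlus_even]
    exact T_mul_mem_lamBox_iff (a := -(a:ℤ)) (b := (a:ℤ)) (by ring) (by push_cast; ring)
  · rw [hp_odd_succ f p hp a, lamPlus_odd]
    rw [T_mul_mem_lamBox_iff (a := -((a:ℤ)+1)) (b := (a:ℤ)) (by ring) (by push_cast; ring)]
    exact substar_mem_lamBox_iff (by ring) (by ring)

include hL

lemma diag_transfer (n : ℕ) : sesq L (p n) (p n) = sesq L (f n) (f n) := by
  rcases Nat.even_or_odd n with ⟨a, rfl⟩ | ⟨a, rfl⟩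
  · rw [show a + a = 2 * a from by ring]
    rw [(hp a).1, sesq_shift, sesq_substar L hL, ← sesq_conj_symm L hL]
  · rw [(hp a).2, sesq_shift]

lemma orthflag_transfer (n : ℕ) :
    (∀ g ∈ lamBox 0 (n : ℤ), sesq L (p (n + 1)) g = 0) ↔
      (∀ h ∈ lamPlus n, sesq L (f (n + 1)) h = 0) := by
  rcases Nat.even_or_odd n with ⟨a, rfl⟩ | ⟨a, rfl⟩
  · rw [show a + a = 2 * a from by ring]
    constructor
    · intro H h hh
      rw [lamPlus_even] at hh
      have hg : T (a:ℤ) * h ∈ lamBox 0 ((2*a : ℕ) : ℤ) :=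
        (T_mul_mem_lamBox_iff (a := -(a:ℤ)) (b := (a:ℤ)) (by ring) (by push_cast; ring)).mpr hh
      have key := H _ hg
      rwa [(hp a).2, sesq_shift] at key
    · intro H g hg
      rw [(hp a).2]
      have hh : T (-(a:ℤ)) * g ∈ lamBox (-(a:ℤ)) (a:ℤ) :=
        (T_mul_mem_lamBox_iff (a := 0) (b := ((2*a : ℕ) : ℤ)) (by ring) (by push_cast; ring)).mpr hg
      have hgeq : g = T (a:ℤ) * (T (-(a:ℤ)) * g) := by
        rw [show T (a:ℤ) * (T (-(a:ℤ)) * g) = T (-(-(a:ℤ))) * (T (-(a:ℤ)) * g) from by rw [neg_neg],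
          T_mul_cancel]
      rw [hgeq, sesq_shift]
      exact H _ ((lamPlus_even a) ▸ hh)
  · constructor
    · intro H h hh
      rw [lamPlus_odd] at hh
      have hg : T ((a:ℤ)+1) * substar h ∈ lamBox 0 ((2*a+1 : ℕ) : ℤ) :=
        (T_mul_mem_lamBox_iff (a := -((a:ℤ)+1)) (b := (a:ℤ)) (by ring) (by push_cast; ring)).mpr
          ((substar_mem_lamBox_iff (by ring) (by ring)).mpr hh)
      have key := H _ hg
      rw [hp_odd_succ f p hp a, sesq_shift, sesq_substar L hL] at key
      rwa [starRingEnd_apply, star_eq_zero] at key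
    · intro H g hg
      have hx : T (-((a:ℤ)+1)) * g ∈ lamBox (-((a:ℤ)+1)) (a:ℤ) :=
        (T_mul_mem_lamBox_iff (a := 0) (b := ((2*a+1 : ℕ) : ℤ)) (by ring) (by push_cast; ring)).mpr hg
      have hh : substar (T (-((a:ℤ)+1)) * g) ∈ lamPlus (2*a+1) := by
        rw [lamPlus_odd]
        exact (substar_mem_lamBox_iff (by ring) (by ring)).mpr hx
      have key := H _ hh
      have hgeq : g = T ((a:ℤ)+1) * substar (substar (T (-((a:ℤ)+1)) * g)) := by
        rw [substar_substar,
          show T ((a:ℤ)+1) * (T (-((a:ℤ)+1)) * g) = T (-(-((a:ℤ)+1))) * (T (-((a:ℤ)+1)) * g) from by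
            rw [neg_neg],
          T_mul_cancel]
      rw [hp_odd_succ f p hp a, hgeq, sesq_shift, sesq_substar L hL, key, map_zero]

end Transfer

/-- Proposition 2.2: with p_{2n}(z) := z^n f_{2n*}(z) and
p_{2n+1}(z) := z^n f_{2n+1}(z), the sequence (f_n) is a sequence of right orthogonal
Laurent polynomials w.r.t. L iff (p_n) is a sequence of orthogonal polynomials w.r.t. L;
and (f_n) is orthonormal iff (p_n) is orthonormal. -/
theorem rightOLP_iff_OPS
    (L : LaurentPolynomial ℂ →ₗ[ℂ] ℂ) (hL : IsHermitianL L)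
    (f p : ℕ → LaurentPolynomial ℂ)
    (hp : ∀ n : ℕ, p (2 * n) = T (n : ℤ) * substar (f (2 * n)) ∧
      p (2 * n + 1) = T (n : ℤ) * f (2 * n + 1)) :
    (IsRightOLP L f ↔ IsOPS L p) ∧ (IsRightOnLP L f ↔ IsOnPS L p) := by
  have hdiag := diag_transfer L hL f p hp
  have hmemT := mem_transfer f p hp
  have hmemT' := mem_transfer' f p hp
  have h0T := zero_transfer f p hp
  have horthT := orthflag_transfer L hL f p hp
  have key : IsRightOLP L f ↔ IsOPS L p := by
    unfold IsRightOLP IsOPS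
    constructor
    · rintro ⟨h1, h2, h3, h4, h5⟩
      have p1 : ∀ n : ℕ, p n ∈ lamBox 0 (n : ℤ) := fun n => (hmemT n).mpr (h1 n)
      have p2 : p 0 ≠ 0 := h0T.mpr h2
      have p3 : ∀ n : ℕ, p (n + 1) ∉ lamBox 0 (n : ℤ) := fun n hc => h3 n ((hmemT' n).mp hc)
      have p5 : ∀ n, sesq L (p n) (p n) ≠ 0 := fun n => by rw [hdiag n]; exact h5 n
      have flagf := (orth_iff_flag L hL lamPlus (fun n => lamPlus_fd n) finrank_lamPlus
        lamPlus_mono f h1 h2 h3).mp h4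
      have p4 := (orth_iff_flag L hL (fun n : ℕ => lamBox 0 (n : ℤ)) (fun n => lamBox_fd _ _)
        finrank_lamBoxN lamBoxN_mono p p1 p2 p3).mpr (fun n => (horthT n).mpr (flagf n))
      exact ⟨p1, p2, p3, p4, p5⟩
    · rintro ⟨h1, h2, h3, h4, h5⟩
      have p1 : ∀ n, f n ∈ lamPlus n := fun n => (hmemT n).mp (h1 n)
      have p2 : f 0 ≠ 0 := h0T.mp h2
      have p3 : ∀ n, f (n + 1) ∉ lamPlus n := fun n hc => h3 n ((hmemT' n).mpr hc)
      have p5 : ∀ n, sesq L (f n) (f n) ≠ 0 := fun n => by rw [← hdiag n]; exact h5 n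
      have flagp := (orth_iff_flag L hL (fun n : ℕ => lamBox 0 (n : ℤ)) (fun n => lamBox_fd _ _)
        finrank_lamBoxN lamBoxN_mono p h1 h2 h3).mp h4
      have p4 := (orth_iff_flag L hL lamPlus (fun n => lamPlus_fd n) finrank_lamPlus
        lamPlus_mono f p1 p2 p3).mpr (fun n => (horthT n).mp (flagp n))
      exact ⟨p1, p2, p3, p4, p5⟩
  refine ⟨key, ?_⟩
  unfold IsRightOnLP IsOnPS
  rw [key]
  constructor
  · rintro ⟨h, hn⟩
    exact ⟨h, fun n => by rw [hdiag n]; exact hn n⟩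
  · rintro ⟨h, hn⟩
    exact ⟨h, fun n => by rw [← hdiag n]; exact hn n⟩
end
end

section
/- The standard right orthonormal Laurent polynomials χ_n satisfy, as identities in ℂ[z, z^{−1}]: z·χ_0 = −a_1·χ_0 + ρ_1·χ_1, and for every n ≥ 1: z·χ_{2n−1} = −ρ̂_{2n−1} a_{2n}·χ_{2n−2} − conj(a_{2n−1}) a_{2n}·χ_{2n−1} − ρ_{2n} a_{2n+1}·χ_{2n} + ρ_{2n} ρ_{2n+1}·χ_{2n+1} and z·χ_{2n} = ρ̂_{2n−1} ρ̂_{2n}·χ_{2n−2} + conj(a_{2n−1}) ρ̂_{2n}·χ_{2n−1} − conj(a_{2n}) a_{2n+1}·χ_{2n} + conj(a_{2n}) ρ_{2n+1}·χ_{2n+1}. -/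
open LaurentPolynomial Polynomial Complex ComplexConjugate

noncomputable section

/-- Reversed polynomial with conjugated coefficients: p*(z) = Σ conj(c_{m-k}) z^k. -/
def revc (p : Polynomial ℂ) : Polynomial ℂ := (p.map (starRingEnd ℂ)).reverse

/-- Monic orthogonal polynomials from Schur parameters: φ_0 = 1,
φ_n = z φ_{n-1} + a_n φ*_{n-1}. -/
def phi (a : ℕ → ℂ) : ℕ → Polynomial ℂ
  | 0 => 1
  | n + 1 => X * phi a n + Polynomial.C (a (n + 1)) * revc (phi a n)

/-- ρ_n := |1 - |a_n|²|^{1/2}. -/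
def rho (a : ℕ → ℂ) (n : ℕ) : ℝ := Real.sqrt |1 - ‖a n‖ ^ 2|

/-- ε_n := sgn (1 - |a_n|²). -/
def sgn (a : ℕ → ℂ) (n : ℕ) : ℝ := Real.sign (1 - ‖a n‖ ^ 2)

/-- ρ̂_n := ε_n ρ_n. -/
def rhoh (a : ℕ → ℂ) (n : ℕ) : ℝ := sgn a n * rho a n

/-- κ_n := Π_{k=1}^n ρ_k⁻¹ (κ_0 = 1). -/
def kap (a : ℕ → ℂ) (n : ℕ) : ℝ := ∏ k ∈ Finset.Icc 1 n, (rho a k)⁻¹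

/-- e_n := Π_{k=1}^n ε_k (e_0 = 1). -/
def esgn (a : ℕ → ℂ) (n : ℕ) : ℝ := ∏ k ∈ Finset.Icc 1 n, sgn a k

/-- Orthonormal polynomials φ̂_n := κ_n φ_n. -/
def phin (a : ℕ → ℂ) (n : ℕ) : Polynomial ℂ := Polynomial.C ((kap a n : ℝ) : ℂ) * phi a n

/-- Standard right orthonormal Laurent polynomials:
χ_{2m} = z^{-m} φ̂*_{2m}, χ_{2m+1} = z^{-m} φ̂_{2m+1}. -/
def chi (a : ℕ → ℂ) (n : ℕ) : LaurentPolynomial ℂ :=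
  T (-((n / 2 : ℕ) : ℤ)) * (if Even n then revc (phin a n) else phin a n).toLaurent

/-- The kernel K_n(z,y) := Σ_{k=0}^n e_k φ̂_k(z) conj(φ̂_k(y)). -/
def Kker (a : ℕ → ℂ) (n : ℕ) (z y : ℂ) : ℂ :=
  ∑ k ∈ Finset.range (n + 1),
    ((esgn a k : ℝ) : ℂ) * (phin a k).eval z * conj ((phin a k).eval y)

/-- Entries of the five-diagonal matrix, with rows/columns indexed from 1. -/
def Fent (a : ℕ → ℂ) (i j : ℕ) : ℂ :=
  if i = 1 then
    if j = 1 then -a 1 else if j = 2 then (rho a 1 : ℂ) else 0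
  else if i % 2 = 0 then
    if j + 1 = i then -(rhoh a (i - 1) : ℂ) * a i
    else if j = i then -conj (a (i - 1)) * a i
    else if j = i + 1 then -(rho a i : ℂ) * a (i + 1)
    else if j = i + 2 then (rho a i : ℂ) * (rho a (i + 1) : ℂ)
    else 0
  else
    if j + 2 = i then (rhoh a (i - 2) : ℂ) * (rhoh a (i - 1) : ℂ)
    else if j + 1 = i then conj (a (i - 2)) * (rhoh a (i - 1) : ℂ)
    else if j = i then -conj (a (i - 1)) * a i
    else if j = i + 1 then conj (a (i - 1)) * (rho a i : ℂ)
    else 0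

/-- The n×n five-diagonal matrix ℱ_n. -/
def Fmat (a : ℕ → ℂ) (n : ℕ) : Matrix (Fin n) (Fin n) ℂ :=
  Matrix.of fun i j => Fent a (i.val + 1) (j.val + 1)

/-- Evaluation of a Laurent polynomial at a nonzero complex number. -/
def levalAt (z : ℂ) (f : LaurentPolynomial ℂ) : ℂ :=
  Finsupp.sum f.coeff fun k c => c * z ^ k

namespace ChiAux

variable (a : ℕ → ℂ)

lemma conj_invol : (starRingEnd ℂ).comp (starRingEnd ℂ) = RingHom.id ℂ := by
  ext z <;> simp

lemma natDegree_map_conj (p : Polynomial ℂ) :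
    (p.map (starRingEnd ℂ)).natDegree = p.natDegree :=
  natDegree_map_eq_of_injective (RingHom.injective _) p

lemma reflect_reflect (N : ℕ) (p : Polynomial ℂ) : reflect N (reflect N p) = p := by
  ext i; simp [coeff_reflect, revAt_invol]

lemma map_reflect (N : ℕ) (p : Polynomial ℂ) :
    (reflect N p).map (starRingEnd ℂ) = reflect N (p.map (starRingEnd ℂ)) := by
  ext i; simp [coeff_reflect, coeff_map]

lemma reflect_one_X : reflect 1 (X : Polynomial ℂ) = 1 := by
  rw [← pow_one (X : Polynomial ℂ), reflect_monomial, revAt_le (le_refl 1)]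
  norm_num

lemma phi_deg : ∀ n, (phi a n).Monic ∧ (phi a n).natDegree = n := by
  intro n
  induction n with
  | zero => exact ⟨monic_one, natDegree_one⟩
  | succ n ih =>
    obtain ⟨hm, hd⟩ := ih
    have hXm : (X * phi a n).Monic := monic_X.mul hm
    have hXd : (X * phi a n).natDegree = n + 1 := by
      rw [natDegree_mul X_ne_zero hm.ne_zero, natDegree_X, hd]; omega
    have hrev : (revc (phi a n)).natDegree ≤ n := by
      rw [revc]
      exact le_trans (reverse_natDegree_le _) (by rw [natDegree_map_conj, hd])
    have h1 : (Polynomial.C (a (n+1)) * revc (phi a n)).natDegree ≤ n :=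
      le_trans (natDegree_C_mul_le _ _) hrev
    have hq : (Polynomial.C (a (n+1)) * revc (phi a n)).degree < (X * phi a n).degree := by
      have h2 : (Polynomial.C (a (n+1)) * revc (phi a n)).degree ≤ (n : WithBot ℕ) := by
        refine le_trans degree_le_natDegree ?_
        exact_mod_cast h1
      refine lt_of_le_of_lt h2 ?_
      rw [degree_eq_natDegree hXm.ne_zero, hXd]
      exact_mod_cast Nat.lt_succ_self n
    constructor
    · show (X * phi a n + Polynomial.C (a (n+1)) * revc (phi a n)).Monic
      exact hXm.add_of_left hq
    · show (X * phi a n + Polynomial.C (a (n+1)) * revc (phi a n)).natDegree = n + 1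
      rw [natDegree_eq_of_degree_eq (degree_add_eq_left_of_degree_lt hq), hXd]

lemma revc_phi_succ (n : ℕ) :
    revc (phi a (n+1)) = revc (phi a n) + Polynomial.C ((starRingEnd ℂ) (a (n+1))) * (X * phi a n) := by
  have hd := (phi_deg a n).2
  have hd1 := (phi_deg a (n+1)).2
  have hrev : revc (phi a n) = reflect n ((phi a n).map (starRingEnd ℂ)) := by
    rw [revc, Polynomial.reverse, natDegree_map_conj, hd]
  have key1 : reflect (n+1) (X * (phi a n).map (starRingEnd ℂ)) = revc (phi a n) := by
    rw [hrev, show n + 1 = 1 + n by ring,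
      reflect_mul _ _ natDegree_X_le (le_of_eq (by rw [natDegree_map_conj, hd])),
      reflect_one_X, one_mul]
  have key2 : reflect (n+1) ((revc (phi a n)).map (starRingEnd ℂ)) = X * phi a n := by
    have e1 : (revc (phi a n)).map (starRingEnd ℂ) = reflect n (phi a n) := by
      rw [hrev, map_reflect, Polynomial.map_map, conj_invol, Polynomial.map_id]
    have e2 : reflect (n+1) (X * phi a n) = reflect n (phi a n) := by
      rw [show n + 1 = 1 + n by ring, reflect_mul _ _ natDegree_X_le hd.le,
        reflect_one_X, one_mul]
    rw [e1, ← e2, reflect_reflect]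
  rw [show revc (phi a (n+1)) = reflect (n+1) ((phi a (n+1)).map (starRingEnd ℂ)) from by
    rw [revc, Polynomial.reverse, natDegree_map_conj, hd1]]
  simp only [phi]
  rw [Polynomial.map_add, Polynomial.map_mul, Polynomial.map_mul, Polynomial.map_X,
    Polynomial.map_C, reflect_add, reflect_C_mul, key1, key2]

lemma revc_C_real_mul (r : ℝ) (hr : r ≠ 0) (p : Polynomial ℂ) :
    revc (Polynomial.C ((r:ℝ):ℂ) * p) = Polynomial.C ((r:ℝ):ℂ) * revc p := by
  rw [revc, revc, Polynomial.map_mul, Polynomial.map_C, Complex.conj_ofReal,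
    Polynomial.reverse, Polynomial.reverse,
    natDegree_C_mul (show ((r:ℝ):ℂ) ≠ 0 from Complex.ofReal_ne_zero.mpr hr), reflect_C_mul]


section Scalars

lemma real_sign_mul_abs (x : ℝ) : Real.sign x * |x| = x := by
  rcases lt_trichotomy x 0 with h|h|h
  · rw [Real.sign_of_neg h, abs_of_neg h]; ring
  · simp [h]
  · rw [Real.sign_of_pos h, abs_of_pos h]; ring

lemma rho_sq (n : ℕ) : rho a n ^ 2 = |1 - ‖a n‖ ^ 2| := by
  rw [rho, Real.sq_sqrt (abs_nonneg _)]

lemma sgn_mul_rho_sq (n : ℕ) : sgn a n * rho a n ^ 2 = 1 - ‖a n‖ ^ 2 := by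
  rw [rho_sq, sgn, real_sign_mul_abs]

lemma rho_ne_zero {n : ℕ} (hn : ‖a n‖ ≠ 1) : rho a n ≠ 0 := by
  intro h
  have h1 : |1 - ‖a n‖ ^ 2| = 0 := by
    rw [← rho_sq a n, h]; ring
  have h2 : ‖a n‖ ^ 2 = 1 := by
    have := abs_eq_zero.mp h1; linarith
  have h0 : (0:ℝ) ≤ ‖a n‖ := norm_nonneg _
  exact hn (by rw [← Real.sqrt_sq h0, h2, Real.sqrt_one])

variable (ha : ∀ n, 1 ≤ n → ‖a n‖ ≠ 1)
include ha

lemma kap_ne_zero (n : ℕ) : kap a n ≠ 0 := by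
  rw [kap]
  refine Finset.prod_ne_zero_iff.mpr fun k hk => inv_ne_zero (rho_ne_zero a (ha k ?_))
  exact (Finset.mem_Icc.mp hk).1

lemma rho_mul_kap (n : ℕ) : rho a (n+1) * kap a (n+1) = kap a n := by
  have h : rho a (n+1) ≠ 0 := rho_ne_zero a (ha (n+1) (by omega))
  rw [kap, kap, Finset.prod_Icc_succ_top (by omega), mul_comm, mul_assoc,
    inv_mul_cancel₀ h, mul_one]

end Scalars

lemma abs_sq_cast (n : ℕ) :
    (starRingEnd ℂ) (a n) * a n = ((‖a n‖ ^ 2 : ℝ) : ℂ) := by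
  rw [mul_comm, Complex.mul_conj, Complex.normSq_eq_norm_sq]

section Rec

variable (ha : ∀ n, 1 ≤ n → ‖a n‖ ≠ 1)
include ha

lemma R1 (n : ℕ) :
    Polynomial.C ((rho a (n+1) : ℝ) : ℂ) * phin a (n+1) =
      X * phin a n + Polynomial.C (a (n+1)) * revc (phin a n) := by
  have hC : Polynomial.C ((rho a (n+1) : ℝ) : ℂ) * Polynomial.C ((kap a (n+1) : ℝ) : ℂ) =
      Polynomial.C ((kap a n : ℝ) : ℂ) := by
    rw [← map_mul]
    congr 1
    exact_mod_cast congrArg (fun x : ℝ => (x : ℂ)) (rho_mul_kap a ha n)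
  simp only [phin, phi]
  rw [revc_C_real_mul _ (kap_ne_zero a ha n)]
  linear_combination (X * phi a n + Polynomial.C (a (n+1)) * revc (phi a n)) * hC

lemma I1 (n : ℕ) :
    revc (phin a (n+1)) =
      Polynomial.C ((rhoh a (n+1) : ℝ) : ℂ) * revc (phin a n) +
      Polynomial.C ((starRingEnd ℂ) (a (n+1))) * phin a (n+1) := by
  have hr : rhoh a (n+1) * kap a n = (1 - ‖a (n+1)‖ ^ 2) * kap a (n+1) := by
    have h1 := rho_mul_kap a ha n
    have h2 := sgn_mul_rho_sq a (n+1)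
    rw [rhoh]
    linear_combination (-(sgn a (n+1) * rho a (n+1))) * h1 + kap a (n+1) * h2
  have hc : ((kap a (n+1) : ℝ) : ℂ) =
      ((rhoh a (n+1) : ℝ) : ℂ) * ((kap a n : ℝ) : ℂ) +
      (starRingEnd ℂ) (a (n+1)) * a (n+1) * ((kap a (n+1) : ℝ) : ℂ) := by
    rw [abs_sq_cast]
    have h := congrArg (fun x : ℝ => (x : ℂ)) hr
    push_cast at h ⊢
    linear_combination -h
  have hC : Polynomial.C ((kap a (n+1) : ℝ) : ℂ) =
      Polynomial.C ((rhoh a (n+1) : ℝ) : ℂ) * Polynomial.C ((kap a n : ℝ) : ℂ) +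
      Polynomial.C ((starRingEnd ℂ) (a (n+1))) * Polynomial.C (a (n+1)) *
        Polynomial.C ((kap a (n+1) : ℝ) : ℂ) := by
    rw [← map_mul, ← map_mul, ← map_mul, ← map_add]
    exact congrArg Polynomial.C hc
  simp only [phin]
  rw [revc_C_real_mul _ (kap_ne_zero a ha (n+1)), revc_C_real_mul _ (kap_ne_zero a ha n),
    revc_phi_succ]
  simp only [phi]
  linear_combination revc (phi a n) * hC

lemma P1 (n : ℕ) :
    X ^ 2 * phin a (n+1) =
      Polynomial.C (-((rhoh a (n+1) : ℝ) : ℂ) * a (n+2)) * (X * revc (phin a n)) +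
      Polynomial.C (-(starRingEnd ℂ) (a (n+1)) * a (n+2)) * (X * phin a (n+1)) +
      Polynomial.C (-((rho a (n+2) : ℝ) : ℂ) * a (n+3)) * revc (phin a (n+2)) +
      Polynomial.C (((rho a (n+2) : ℝ) : ℂ) * ((rho a (n+3) : ℝ) : ℂ)) * phin a (n+3) := by
  have h1 := R1 a ha (n+2)
  rw [show n+2+1 = n+3 from by omega] at h1
  have h2 := R1 a ha (n+1)
  rw [show n+1+1 = n+2 from by omega] at h2
  have h3 := I1 a ha n
  simp only [map_mul, map_neg]
  linear_combination (-(Polynomial.C ((rho a (n+2) : ℝ) : ℂ))) * h1 - X * h2 -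
    Polynomial.C (a (n+2)) * X * h3

lemma P2 (n : ℕ) :
    X * revc (phin a (n+2)) =
      Polynomial.C (((rhoh a (n+1) : ℝ) : ℂ) * ((rhoh a (n+2) : ℝ) : ℂ)) * (X * revc (phin a n)) +
      Polynomial.C ((starRingEnd ℂ) (a (n+1)) * ((rhoh a (n+2) : ℝ) : ℂ)) * (X * phin a (n+1)) +
      Polynomial.C (-(starRingEnd ℂ) (a (n+2)) * a (n+3)) * revc (phin a (n+2)) +
      Polynomial.C ((starRingEnd ℂ) (a (n+2)) * ((rho a (n+3) : ℝ) : ℂ)) * phin a (n+3) := by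
  have h1 := R1 a ha (n+2)
  rw [show n+2+1 = n+3 from by omega] at h1
  have h3 := I1 a ha n
  have h4 := I1 a ha (n+1)
  rw [show n+1+1 = n+2 from by omega] at h4
  simp only [map_mul, map_neg]
  linear_combination X * h4 - Polynomial.C ((starRingEnd ℂ) (a (n+2))) * h1 +
    Polynomial.C (((rhoh a (n+2) : ℝ) : ℂ)) * X * h3

end Rec

section Laurent

lemma smul_T_toLaurent (c : ℂ) (j : ℤ) (p : Polynomial ℂ) :
    c • (T j * Polynomial.toLaurent p) = T j * Polynomial.toLaurent (Polynomial.C c * p) := by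
  have h2 := map_smul Polynomial.toLaurentAlg c p
  rw [Polynomial.toLaurentAlg_apply, Polynomial.toLaurentAlg_apply] at h2
  rw [← Polynomial.smul_eq_C_mul, h2, mul_smul_comm]

lemma Lfact (j : ℤ) (p : Polynomial ℂ) :
    T j * Polynomial.toLaurent (X * p) = T (j+1) * Polynomial.toLaurent p := by
  rw [map_mul, Polynomial.toLaurent_X, ← mul_assoc, ← T_add]

lemma phin_zero : phin a 0 = 1 := by
  have h : kap a 0 = 1 := by rw [kap, Finset.Icc_eq_empty (by omega), Finset.prod_empty]
  simp [phin, phi, h]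

lemma revc_one : revc (1 : Polynomial ℂ) = 1 := by
  rw [revc, Polynomial.map_one, Polynomial.reverse, natDegree_one, ← Polynomial.C_1, reflect_C]
  simp

end Laurent

end ChiAux

/-- Proposition 2.5: the five-term recurrence relation for the standard
right orthonormal Laurent polynomials χ_n. -/
theorem chi_five_term_recurrence (a : ℕ → ℂ) (ha : ∀ n, 1 ≤ n → ‖a n‖ ≠ 1) :
    T 1 * chi a 0 = (-a 1) • chi a 0 + (rho a 1 : ℂ) • chi a 1 ∧
    ∀ n : ℕ, 1 ≤ n →
      T 1 * chi a (2 * n - 1) =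
          (-(rhoh a (2 * n - 1) : ℂ) * a (2 * n)) • chi a (2 * n - 2) +
            (-conj (a (2 * n - 1)) * a (2 * n)) • chi a (2 * n - 1) +
            (-(rho a (2 * n) : ℂ) * a (2 * n + 1)) • chi a (2 * n) +
            ((rho a (2 * n) : ℂ) * (rho a (2 * n + 1) : ℂ)) • chi a (2 * n + 1) ∧
      T 1 * chi a (2 * n) =
          ((rhoh a (2 * n - 1) : ℂ) * (rhoh a (2 * n) : ℂ)) • chi a (2 * n - 2) +
            (conj (a (2 * n - 1)) * (rhoh a (2 * n) : ℂ)) • chi a (2 * n - 1) +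
            (-conj (a (2 * n)) * a (2 * n + 1)) • chi a (2 * n) +
            (conj (a (2 * n)) * (rho a (2 * n + 1) : ℂ)) • chi a (2 * n + 1) := by
  
  constructor
  · have h := ChiAux.R1 a ha 0
    simp only [zero_add] at h
    have hrev0 : revc (phin a 0) = phin a 0 := by
      rw [ChiAux.phin_zero, ChiAux.revc_one]
    rw [hrev0] at h
    have c0 : chi a 0 = Polynomial.toLaurent (phin a 0) := by
      rw [chi, if_pos (Even.zero), hrev0]
      norm_num
    have c1 : chi a 1 = Polynomial.toLaurent (phin a 1) := by
      rw [chi, if_neg (by rintro ⟨r, hr⟩; omega)]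
      norm_num
    have s1 : ∀ (c : ℂ) (p : Polynomial ℂ),
        c • Polynomial.toLaurent p = Polynomial.toLaurent (Polynomial.C c * p) := by
      intro c p
      have := ChiAux.smul_T_toLaurent c 0 p
      rwa [T_zero, one_mul, one_mul] at this
    have s2 : ∀ p : Polynomial ℂ,
        T 1 * Polynomial.toLaurent p = Polynomial.toLaurent (X * p) := by
      intro p; rw [map_mul, Polynomial.toLaurent_X]
    rw [c0, c1, s2, s1, s1, ← map_add]
    refine congrArg _ ?_
    simp only [map_neg]
    linear_combination -h
  · intro n hn
    obtain ⟨m, rfl⟩ : ∃ m, n = m + 1 := ⟨n - 1, by omega⟩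
    rw [show 2*(m+1)+1 = 2*m+3 from by omega, show 2*(m+1)-1 = 2*m+1 from by omega,
      show 2*(m+1)-2 = 2*m from by omega, show 2*(m+1) = 2*m+2 from by omega]
    have c0 : chi a (2*m) = T (-(m:ℤ)) * Polynomial.toLaurent (revc (phin a (2*m))) := by
      rw [chi, if_pos ⟨m, by ring⟩]; congr 2 <;> omega
    have c1 : chi a (2*m+1) = T (-(m:ℤ)) * Polynomial.toLaurent (phin a (2*m+1)) := by
      rw [chi, if_neg (by rintro ⟨r, hr⟩; omega)]; congr 2 <;> omega
    have c2 : chi a (2*m+2) = T (-((m:ℤ)+1)) * Polynomial.toLaurent (revc (phin a (2*m+2))) := by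
      rw [chi, if_pos ⟨m+1, by ring⟩]; congr 2 <;> omega
    have c3 : chi a (2*m+3) = T (-((m:ℤ)+1)) * Polynomial.toLaurent (phin a (2*m+3)) := by
      rw [chi, if_neg (by rintro ⟨r, hr⟩; omega)]; congr 2 <;> omega
    have hT1 : ∀ p : Polynomial ℂ, T 1 * (T (-(m:ℤ)) * Polynomial.toLaurent p)
        = T (-((m:ℤ)+1)) * Polynomial.toLaurent (X^2 * p) := by
      intro p
      rw [show (X^2*p : Polynomial ℂ) = X*(X*p) by ring, ChiAux.Lfact, ChiAux.Lfact,
        ← mul_assoc, ← T_add]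
      congr 2 <;> omega
    have hT2 : ∀ p : Polynomial ℂ, T 1 * (T (-((m:ℤ)+1)) * Polynomial.toLaurent p)
        = T (-((m:ℤ)+1)) * Polynomial.toLaurent (X * p) := by
      intro p
      rw [ChiAux.Lfact, ← mul_assoc, ← T_add]
      congr 2 <;> omega
    have hS0 : ∀ (c : ℂ) (p : Polynomial ℂ), c • (T (-(m:ℤ)) * Polynomial.toLaurent p)
        = T (-((m:ℤ)+1)) * Polynomial.toLaurent (Polynomial.C c * (X * p)) := by
      intro c p
      rw [ChiAux.smul_T_toLaurent,
        show (Polynomial.C c * (X*p) : Polynomial ℂ) = X * (Polynomial.C c * p) by ring,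
        ChiAux.Lfact]
      congr 2 <;> omega
    have hS1 : ∀ (c : ℂ) (p : Polynomial ℂ), c • (T (-((m:ℤ)+1)) * Polynomial.toLaurent p)
        = T (-((m:ℤ)+1)) * Polynomial.toLaurent (Polynomial.C c * p) :=
      fun c p => ChiAux.smul_T_toLaurent c _ p
    constructor
    · rw [c1, c0, c2, c3, hT1, hS0, hS0, hS1, hS1, ← mul_add, ← mul_add, ← mul_add,
        ← map_add, ← map_add, ← map_add]
      congr 1
      exact congrArg Polynomial.toLaurent (ChiAux.P1 a ha (2*m))
    · rw [c2, c0, c1, c3, hT2, hS0, hS0, hS1, hS1, ← mul_add, ← mul_add, ← mul_add,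
        ← map_add, ← map_add, ← map_add]
      congr 1
      exact congrArg Polynomial.toLaurent (ChiAux.P2 a ha (2*m))
end
end

section
/- Let n ≥ 1 and let 0 ≤ R_1 ≤ R_2 be real numbers such that R_1 ≤ |a_j| ≤ R_2 for all 1 ≤ j ≤ n. Set K := max{|1 − R_1²|^{1/2}, |1 − R_2²|^{1/2}}, K_2 := (R_2 + K)², and K_1 := R_1² + R_2² − K_2. Then every zero z ∈ ℂ of φ_n satisfies K_1 ≤ |z| ≤ K_2. -/
open LaurentPolynomial Polynomial Complex ComplexConjugate

noncomputable section

namespace ZB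

lemma reflect_reflect (N : ℕ) (p : Polynomial ℂ) :
    Polynomial.reflect N (Polynomial.reflect N p) = p := by
  ext k
  rw [Polynomial.coeff_reflect, Polynomial.coeff_reflect, Polynomial.revAt_invol]

lemma map_conj_conj (p : Polynomial ℂ) :
    (p.map (starRingEnd ℂ)).map (starRingEnd ℂ) = p := by
  rw [Polynomial.map_map]
  convert Polynomial.map_id using 2
  exact RingHom.ext fun x => Complex.conj_conj x

lemma natDegree_map_conj (p : Polynomial ℂ) :
    (p.map (starRingEnd ℂ)).natDegree = p.natDegree :=
  Polynomial.natDegree_map_eq_of_injective (RingHom.injective _) p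

lemma revc_eq_reflect (p : Polynomial ℂ) (n : ℕ) (h : p.natDegree = n) :
    revc p = Polynomial.reflect n (p.map (starRingEnd ℂ)) := by
  rw [revc, Polynomial.reverse, natDegree_map_conj, h]

lemma phi_monic_deg (a : ℕ → ℂ) : ∀ n, (phi a n).Monic ∧ (phi a n).natDegree = n := by
  intro n
  induction n with
  | zero => exact ⟨monic_one, natDegree_one⟩
  | succ n ih =>
    obtain ⟨hm, hd⟩ := ih
    have hXm : (X * phi a n).Monic := monic_X.mul hm
    have hXd : (X * phi a n).natDegree = n + 1 := by
      rw [natDegree_mul X_ne_zero hm.ne_zero, natDegree_X, hd, add_comm]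
    have h1 : (Polynomial.C (a (n+1)) * revc (phi a n)).degree ≤ (n : WithBot ℕ) := by
      refine Polynomial.degree_le_natDegree.trans ?_
      exact_mod_cast (Polynomial.natDegree_C_mul_le _ _).trans
        ((Polynomial.reverse_natDegree_le _).trans (le_of_eq (by rw [natDegree_map_conj, hd])))
    have h2 : (X * phi a n).degree = ((n+1 : ℕ) : WithBot ℕ) := by
      rw [Polynomial.degree_eq_natDegree hXm.ne_zero, hXd]
    have hlt : (Polynomial.C (a (n+1)) * revc (phi a n)).degree < (X * phi a n).degree :=
      h1.trans_lt (by rw [h2]; exact_mod_cast Nat.lt_succ_self n)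
    constructor
    · show (X * phi a n + Polynomial.C (a (n+1)) * revc (phi a n)).Monic
      exact hXm.add_of_left hlt
    · show (X * phi a n + Polynomial.C (a (n+1)) * revc (phi a n)).natDegree = n + 1
      exact Polynomial.natDegree_eq_of_degree_eq_some
        (by rw [Polynomial.degree_add_eq_left_of_degree_lt hlt, h2])

lemma revc_succ (a : ℕ → ℂ) (n : ℕ) :
    revc (phi a (n+1)) = Polynomial.C (conj (a (n+1))) * (X * phi a n) + revc (phi a n) := by
  obtain ⟨hm, hd⟩ := phi_monic_deg a n
  obtain ⟨hm1, hd1⟩ := phi_monic_deg a (n+1)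
  have e0 : revc (phi a n) = Polynomial.reflect n ((phi a n).map (starRingEnd ℂ)) :=
    revc_eq_reflect _ n hd
  have e1 : ((revc (phi a n)).map (starRingEnd ℂ)) = Polynomial.reflect n (phi a n) := by
    rw [e0, ← Polynomial.reflect_map, map_conj_conj]
  have e2 : (phi a (n+1)).map (starRingEnd ℂ)
      = X * ((phi a n).map (starRingEnd ℂ))
        + Polynomial.C (conj (a (n+1))) * Polynomial.reflect n (phi a n) := by
    show ((X * phi a n + Polynomial.C (a (n+1)) * revc (phi a n)).map (starRingEnd ℂ)) = _
    rw [Polynomial.map_add, Polynomial.map_mul, Polynomial.map_mul, Polynomial.map_X,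
      Polynomial.map_C, e1]
  have e3 : Polynomial.reflect (n+1) (X * ((phi a n).map (starRingEnd ℂ)))
      = revc (phi a n) := by
    have := Polynomial.reflect_mul (X : Polynomial ℂ) ((phi a n).map (starRingEnd ℂ))
      (F := 1) (G := n) (by simp) (by rw [natDegree_map_conj, hd])
    rw [show 1 + n = n + 1 by ring] at this
    rw [this, Polynomial.reflect_one_X, one_mul, e0]
  have e4 : Polynomial.reflect (n+1) (Polynomial.reflect n (phi a n)) = X * phi a n := by
    have h5 : Polynomial.reflect (n+1) (X * phi a n) = Polynomial.reflect n (phi a n) := by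
      have := Polynomial.reflect_mul (X : Polynomial ℂ) (phi a n)
        (F := 1) (G := n) (by simp) (le_of_eq hd)
      rw [show 1 + n = n + 1 by ring] at this
      rw [this, Polynomial.reflect_one_X, one_mul]
    rw [← h5, reflect_reflect]
  rw [revc_eq_reflect _ (n+1) hd1, e2, Polynomial.reflect_add, Polynomial.reflect_C_mul,
    e3, e4, add_comm]

end ZB

namespace ZB2
open ZB

lemma eval_phi0 (a : ℕ → ℂ) (z : ℂ) : Polynomial.eval z (phi a 0) = 1 := by simp [phi]

lemma eval_revc0 (a : ℕ → ℂ) (z : ℂ) : Polynomial.eval z (revc (phi a 0)) = 1 := by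
  have : revc (phi a 0) = 1 := by
    rw [show phi a 0 = 1 from rfl, revc_eq_reflect 1 0 natDegree_one]
    simp
  rw [this]; simp

lemma eval_u (a : ℕ → ℂ) (z : ℂ) (k : ℕ) :
    Polynomial.eval z (phi a (k+1))
      = z * Polynomial.eval z (phi a k) + a (k+1) * Polynomial.eval z (revc (phi a k)) := by
  show Polynomial.eval z (X * phi a k + Polynomial.C (a (k+1)) * revc (phi a k)) = _
  simp

lemma eval_v (a : ℕ → ℂ) (z : ℂ) (k : ℕ) :
    Polynomial.eval z (revc (phi a (k+1)))
      = conj (a (k+1)) * (z * Polynomial.eval z (phi a k))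
        + Polynomial.eval z (revc (phi a k)) := by
  rw [revc_succ]; simp

lemma eval_v' (a : ℕ → ℂ) (z : ℂ) (k : ℕ) :
    Polynomial.eval z (revc (phi a (k+1)))
      = conj (a (k+1)) * Polynomial.eval z (phi a (k+1))
        + (1 - conj (a (k+1)) * a (k+1)) * Polynomial.eval z (revc (phi a k)) := by
  linear_combination eval_v a z k - conj (a (k+1)) * eval_u a z k

lemma eval_u' (a : ℕ → ℂ) (z : ℂ) (k : ℕ) :
    Polynomial.eval z (phi a (k+1))
      = a (k+1) * Polynomial.eval z (revc (phi a (k+1)))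
        + (1 - conj (a (k+1)) * a (k+1)) * (z * Polynomial.eval z (phi a k)) := by
  linear_combination eval_u a z k - a (k+1) * eval_v a z k

lemma abs_one_sub_conj_mul (w : ℂ) :
    ‖1 - conj w * w‖ = |1 - ‖w‖ ^ 2| := by
  have hcw : (1 : ℂ) - conj w * w = ((1 - ‖w‖ ^ 2 : ℝ) : ℂ) := by
    rw [mul_comm, Complex.mul_conj, Complex.normSq_eq_norm_sq]
    push_cast; ring
  rw [hcw, Complex.norm_real, Real.norm_eq_abs]

lemma M_ge_one (R₂ K : ℝ) (hR₂ : 0 ≤ R₂) (hK : 0 ≤ K) (h : 1 - R₂^2 ≤ K^2) :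
    1 ≤ R₂ + K := by
  nlinarith [sq_nonneg (1 - R₂ - K), sq_nonneg (1 - R₂ + K), mul_nonneg hR₂ hK]

lemma IIa (R₁ R₂ K : ℝ) (h0 : 0 ≤ R₁) (hR : R₁ ≤ R₂) (hK : 0 ≤ K)
    (hK1 : 1 - R₁^2 ≤ K^2) (hpos : 0 < R₁^2 + R₂^2 - (R₂+K)^2) :
    1 ≤ R₁ * (R₂ + K) := by
  have hKR : K ≤ R₁ := by
    nlinarith [mul_nonneg (h0.trans hR) hK, sq_nonneg (R₁ + K)]
  nlinarith [mul_nonneg hK (sub_nonneg.mpr hKR), mul_nonneg h0 (sub_nonneg.mpr hR)]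

lemma IIb (R₁ R₂ K : ℝ) (h0 : 0 ≤ R₁) (hR : R₁ ≤ R₂) (hK : 0 ≤ K)
    (hK2 : R₂^2 - 1 ≤ K^2) :
    (R₁^2 + R₂^2 - (R₂+K)^2) * (R₂+K)^2 ≤ 1 := by
  have hR₂ : 0 ≤ R₂ := h0.trans hR
  have hsq : R₁^2 ≤ R₂^2 := by nlinarith
  have hs : 0 ≤ 2*R₂*K + K^2 := by positivity
  rcases le_or_gt R₂ 1 with h | h
  · have e1 : R₁^2 ≤ 1 := by nlinarith
    have e2 : R₂^2 ≤ 1 := by nlinarith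
    have hab : R₁^2 * R₂^2 ≤ 1 := by
      nlinarith [mul_nonneg (sub_nonneg.mpr e1) (sub_nonneg.mpr e2), sq_nonneg R₁, sq_nonneg R₂]
    nlinarith [mul_nonneg hs (sub_nonneg.mpr hsq), sq_nonneg (2*R₂*K + K^2)]
  · have h1 : 0 ≤ (R₂^2 - R₁^2) * (R₂^2 + 2*R₂*K + K^2) := by
      apply mul_nonneg (sub_nonneg.mpr hsq); positivity
    have h2 : (2*R₂*K)^2 ≤ (2*R₂*K + K^2)^2 := by nlinarith [mul_nonneg (mul_nonneg hR₂ hK) (sq_nonneg K)]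
    have h3 : 4*R₂^2*(R₂^2-1) ≤ 4*R₂^2*K^2 := by nlinarith [sq_nonneg R₂]
    have h4 : 0 ≤ (3*R₂^2 - 1) * (R₂^2 - 1) :=
      mul_nonneg (by nlinarith) (by nlinarith)
    nlinarith [h1, h2, h3, h4]

end ZB2
namespace ZB2
open ZB Polynomial

lemma abs_sub_le' (x y : ℂ) : ‖x - y‖ ≤ ‖x‖ + ‖y‖ := by
  exact norm_sub_le x y

end ZB2


set_option maxHeartbeats 1000000 in
/-- Theorem 4.1: if R₁ ≤ |a_j| ≤ R₂ for 1 ≤ j ≤ n, then with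
K := max{|1−R₁²|^{1/2}, |1−R₂²|^{1/2}}, K₂ := (R₂+K)², K₁ := R₁²+R₂²−K₂,
every zero z of φ_n satisfies K₁ ≤ |z| ≤ K₂. -/
theorem zeros_bounds (a : ℕ → ℂ) (ha : ∀ n, 1 ≤ n → ‖a n‖ ≠ 1)
    (n : ℕ) (hn : 1 ≤ n) (R₁ R₂ : ℝ) (hR₁ : 0 ≤ R₁) (hR : R₁ ≤ R₂)
    (hbound : ∀ j, 1 ≤ j → j ≤ n → R₁ ≤ ‖a j‖ ∧ ‖a j‖ ≤ R₂) :
    ∀ z : ℂ, (phi a n).eval z = 0 →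
      R₁ ^ 2 + R₂ ^ 2 - (R₂ + max (Real.sqrt |1 - R₁ ^ 2|) (Real.sqrt |1 - R₂ ^ 2|)) ^ 2
          ≤ ‖z‖ ∧
      ‖z‖
          ≤ (R₂ + max (Real.sqrt |1 - R₁ ^ 2|) (Real.sqrt |1 - R₂ ^ 2|)) ^ 2 := by
  set K := max (Real.sqrt |1 - R₁ ^ 2|) (Real.sqrt |1 - R₂ ^ 2|) with hKdef
  have hK0 : 0 ≤ K := le_trans (Real.sqrt_nonneg _) (le_max_left _ _)
  have hKa : |1 - R₁ ^ 2| ≤ K ^ 2 := by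
    calc |1 - R₁ ^ 2| = Real.sqrt |1 - R₁ ^ 2| ^ 2 := (Real.sq_sqrt (abs_nonneg _)).symm
      _ ≤ K ^ 2 := pow_le_pow_left₀ (Real.sqrt_nonneg _) (le_max_left _ _) 2
  have hKb : |1 - R₂ ^ 2| ≤ K ^ 2 := by
    calc |1 - R₂ ^ 2| = Real.sqrt |1 - R₂ ^ 2| ^ 2 := (Real.sq_sqrt (abs_nonneg _)).symm
      _ ≤ K ^ 2 := pow_le_pow_left₀ (Real.sqrt_nonneg _) (le_max_right _ _) 2
  have h1K : 1 - R₁ ^ 2 ≤ K ^ 2 := (le_abs_self _).trans hKa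
  have h2K : R₂ ^ 2 - 1 ≤ K ^ 2 := by
    have h := (le_abs_self (R₂ ^ 2 - 1)).trans (le_of_eq (abs_sub_comm _ _))
    exact h.trans hKb
  have hR₂0 : 0 ≤ R₂ := hR₁.trans hR
  have hM1 : 1 ≤ R₂ + K := ZB2.M_ge_one R₂ K hR₂0 hK0 ((le_abs_self _).trans hKb)
  have hMpos : 0 < R₂ + K := lt_of_lt_of_le one_pos hM1
  have hrho : ∀ j, 1 ≤ j → j ≤ n →
      ‖1 - conj (a j) * a j‖ ≤ K ^ 2 := by
    intro j h1 h2
    rw [ZB2.abs_one_sub_conj_mul]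
    obtain ⟨hl, hr⟩ := hbound j h1 h2
    have ht0 : 0 ≤ ‖a j‖ := norm_nonneg _
    have e1 : R₁ ^ 2 ≤ ‖a j‖ ^ 2 := by nlinarith
    have e2 : ‖a j‖ ^ 2 ≤ R₂ ^ 2 := by nlinarith
    rw [abs_le]
    exact ⟨by linarith, by linarith⟩
  -- Upper-bound invariant
  have upper : ∀ w : ℂ, (R₂ + K) ^ 2 < ‖w‖ → ∀ k, k ≤ n →
      ‖Polynomial.eval w (revc (phi a k))‖
        ≤ (R₂ + K) * ‖Polynomial.eval w (phi a k)‖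
      ∧ 0 < ‖Polynomial.eval w (phi a k)‖ := by
    intro w hw k
    induction k with
    | zero =>
      intro _
      rw [ZB2.eval_phi0, ZB2.eval_revc0]
      constructor
      · simpa using hM1
      · simp
    | succ k ih =>
      intro hk1
      obtain ⟨ihv, ihu⟩ := ih (Nat.le_of_succ_le hk1)
      obtain ⟨hal, har⟩ := hbound (k+1) (Nat.le_add_left 1 k) hk1
      have hrk := hrho (k+1) (Nat.le_add_left 1 k) hk1
      have hu := ZB2.eval_u a w k
      have hv' := ZB2.eval_v' a w k
      set u := Polynomial.eval w (phi a k) with hUdef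
      set v := Polynomial.eval w (revc (phi a k)) with hVdef
      set u' := Polynomial.eval w (phi a (k+1)) with hU'def
      set v' := Polynomial.eval w (revc (phi a (k+1))) with hV'def
      clear_value u v u' v'
      have A1 : ‖w‖ * ‖u‖
          ≤ ‖u'‖ + R₂ * ((R₂ + K) * ‖u‖) := by
        have t0 : w * u = u' - a (k+1) * v := by rw [hu]; ring
        have t1 : ‖w * u‖ ≤ ‖u'‖ + ‖a (k+1) * v‖ := by
          rw [t0]; exact ZB2.abs_sub_le' _ _
        have t2 : ‖a (k+1) * v‖ ≤ R₂ * ((R₂ + K) * ‖u‖) := by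
          rw [norm_mul]
          exact mul_le_mul har ihv (norm_nonneg v) hR₂0
        rw [← norm_mul]; linarith
      have hKMu : K * (R₂ + K) * ‖u‖ ≤ ‖u'‖ := by
        nlinarith [A1, mul_nonneg (sub_nonneg.mpr hw.le) (norm_nonneg u)]
      have hu'pos : 0 < ‖u'‖ := by
        have hzp : 0 < ‖w‖ - R₂ * (R₂ + K) := by
          nlinarith [mul_nonneg hK0 hMpos.le]
        nlinarith [A1, mul_pos hzp ihu]
      refine ⟨?_, hu'pos⟩
      have B1 : ‖v'‖ ≤ ‖a (k+1)‖ * ‖u'‖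
          + ‖1 - conj (a (k+1)) * a (k+1)‖ * ‖v‖ := by
        rw [hv']
        refine (norm_add_le _ _).trans ?_
        rw [norm_mul, norm_mul, Complex.norm_conj]
      have B2 : ‖1 - conj (a (k+1)) * a (k+1)‖ * ‖v‖
          ≤ K ^ 2 * ((R₂ + K) * ‖u‖) :=
        mul_le_mul hrk ihv (norm_nonneg v) (sq_nonneg K)
      have B3 : ‖a (k+1)‖ * ‖u'‖ ≤ R₂ * ‖u'‖ :=
        mul_le_mul_of_nonneg_right har hu'pos.le
      nlinarith [B1, B2, B3, mul_le_mul_of_nonneg_left hKMu hK0]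
  -- Lower-bound invariant
  have lower : ∀ w : ℂ, ‖w‖ < R₁ ^ 2 + R₂ ^ 2 - (R₂ + K) ^ 2 → ∀ k, k ≤ n →
      ‖Polynomial.eval w (phi a k)‖
        ≤ (R₂ + K) * ‖Polynomial.eval w (revc (phi a k))‖
      ∧ 0 < ‖Polynomial.eval w (revc (phi a k))‖ := by
    intro w hw
    have hpos : 0 < R₁ ^ 2 + R₂ ^ 2 - (R₂ + K) ^ 2 :=
      lt_of_le_of_lt (norm_nonneg w) hw
    have hIIb := ZB2.IIb R₁ R₂ K hR₁ hR hK0 h2K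
    have hz2 : ‖w‖ * (R₂ + K) ^ 2 < 1 := by
      nlinarith [mul_lt_mul_of_pos_right hw (pow_pos hMpos 2)]
    intro k
    induction k with
    | zero =>
      intro _
      rw [ZB2.eval_phi0, ZB2.eval_revc0]
      constructor
      · simpa using hM1
      · simp
    | succ k ih =>
      intro hk1
      obtain ⟨ihu, ihv⟩ := ih (Nat.le_of_succ_le hk1)
      obtain ⟨hal, har⟩ := hbound (k+1) (Nat.le_add_left 1 k) hk1
      have hrk := hrho (k+1) (Nat.le_add_left 1 k) hk1
      have hv := ZB2.eval_v a w k
      have hu' := ZB2.eval_u' a w k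
      set u := Polynomial.eval w (phi a k) with hUdef
      set v := Polynomial.eval w (revc (phi a k)) with hVdef
      set u' := Polynomial.eval w (phi a (k+1)) with hU'def
      set v' := Polynomial.eval w (revc (phi a (k+1))) with hV'def
      clear_value u v u' v'
      have C1 : ‖v‖
          ≤ ‖v'‖ + R₂ * (‖w‖ * ((R₂ + K) * ‖v‖)) := by
        have t0 : v = v' - conj (a (k+1)) * (w * u) := by rw [hv]; ring
        have t1 : ‖v‖ ≤ ‖v'‖ + ‖conj (a (k+1)) * (w * u)‖ := by
          rw [t0]
          exact ZB2.abs_sub_le' _ _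
        have t2 : ‖conj (a (k+1)) * (w * u)‖
            ≤ R₂ * (‖w‖ * ((R₂ + K) * ‖v‖)) := by
          rw [norm_mul, norm_mul, Complex.norm_conj]
          exact mul_le_mul har (mul_le_mul_of_nonneg_left ihu (norm_nonneg w))
            (by positivity) hR₂0
        linarith
      have hv'pos : 0 < ‖v'‖ := by
        have h6 : R₂ * ((R₂ + K) * ‖w‖) < 1 := by
          nlinarith [mul_nonneg (mul_nonneg hK0 hMpos.le) (norm_nonneg w)]
        nlinarith [C1, mul_pos (sub_pos.mpr h6) ihv]
      refine ⟨?_, hv'pos⟩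
      have C3 : K * (R₂ + K) * (‖w‖ * ‖v‖) ≤ ‖v'‖ := by
        nlinarith [C1, mul_nonneg (sub_pos.mpr hz2).le ihv.le]
      have C4 : ‖u'‖ ≤ ‖a (k+1)‖ * ‖v'‖
          + ‖1 - conj (a (k+1)) * a (k+1)‖ * ‖w * u‖ := by
        rw [hu']
        refine (norm_add_le _ _).trans ?_
        rw [norm_mul, norm_mul]
      have C5 : ‖1 - conj (a (k+1)) * a (k+1)‖ * ‖w * u‖
          ≤ K ^ 2 * (‖w‖ * ((R₂ + K) * ‖v‖)) := by
        rw [norm_mul]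
        exact mul_le_mul hrk (mul_le_mul_of_nonneg_left ihu (norm_nonneg w))
          (by positivity) (sq_nonneg K)
      have C6 : ‖a (k+1)‖ * ‖v'‖ ≤ R₂ * ‖v'‖ :=
        mul_le_mul_of_nonneg_right har hv'pos.le
      nlinarith [C3, C4, C5, C6, mul_le_mul_of_nonneg_left C3 hK0]
  intro z hzero
  constructor
  · rcases le_or_gt (R₁ ^ 2 + R₂ ^ 2 - (R₂ + K) ^ 2) 0 with h | h
    · exact h.trans (norm_nonneg z)
    · by_contra hc
      push_neg at hc
      obtain ⟨hinv, hvpos⟩ := lower z hc (n-1) (Nat.sub_le n 1)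
      have hn1 : n - 1 + 1 = n := Nat.succ_pred_eq_of_pos hn
      have hu := ZB2.eval_u a z (n-1)
      rw [hn1] at hu
      rw [hzero] at hu
      obtain ⟨hal, har⟩ := hbound n hn le_rfl
      have heq : ‖a n‖ * ‖Polynomial.eval z (revc (phi a (n-1)))‖
          = ‖z‖ * ‖Polynomial.eval z (phi a (n-1))‖ := by
        have t0 : a n * Polynomial.eval z (revc (phi a (n-1)))
            = -(z * Polynomial.eval z (phi a (n-1))) := by linear_combination -hu
        rw [← norm_mul, ← norm_mul, t0, norm_neg]
      have hIIa := ZB2.IIa R₁ R₂ K hR₁ hR hK0 h1K h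
      have hIIb := ZB2.IIb R₁ R₂ K hR₁ hR hK0 h2K
      have hK1M : (R₁ ^ 2 + R₂ ^ 2 - (R₂ + K) ^ 2) * (R₂ + K) ≤ R₁ := by
        nlinarith [hIIa, hIIb, hMpos]
      have s1 : R₁ * ‖Polynomial.eval z (revc (phi a (n-1)))‖
          ≤ ‖a n‖ * ‖Polynomial.eval z (revc (phi a (n-1)))‖ :=
        mul_le_mul_of_nonneg_right hal hvpos.le
      have s2 : ‖z‖ * ‖Polynomial.eval z (phi a (n-1))‖
          ≤ ‖z‖ * ((R₂ + K) * ‖Polynomial.eval z (revc (phi a (n-1)))‖) :=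
        mul_le_mul_of_nonneg_left hinv (norm_nonneg z)
      have s3 : ‖z‖ * ((R₂ + K) * ‖Polynomial.eval z (revc (phi a (n-1)))‖)
          < (R₁ ^ 2 + R₂ ^ 2 - (R₂ + K) ^ 2)
            * ((R₂ + K) * ‖Polynomial.eval z (revc (phi a (n-1)))‖) :=
        mul_lt_mul_of_pos_right hc (mul_pos hMpos hvpos)
      have s4 : (R₁ ^ 2 + R₂ ^ 2 - (R₂ + K) ^ 2)
            * ((R₂ + K) * ‖Polynomial.eval z (revc (phi a (n-1)))‖)
          ≤ R₁ * ‖Polynomial.eval z (revc (phi a (n-1)))‖ := by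
        nlinarith [hK1M, hvpos.le]
      linarith
  · by_contra hc
    push_neg at hc
    have h2 := (upper z hc n le_rfl).2
    rw [hzero] at h2
    simp at h2
end
end

section
/- Let ε > 0 and set δ := √(1 + ε²/(4(1+ε))) − 1 > 0. Then for every n ≥ 1 and every choice of Schur parameters a_1, …, a_n with |a_j| ≠ 1 and | |a_j| − 1 | < δ for all 1 ≤ j ≤ n, every zero z ∈ ℂ of φ_n satisfies | |z| − 1 | < ε. -/
open LaurentPolynomial Polynomial Complex ComplexConjugate

set_option maxHeartbeats 1600000
noncomputable section

section zncAux

lemma znc_reflect_reflect (N : ℕ) (p : Polynomial ℂ) : reflect N (reflect N p) = p := by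
  ext i; simp [coeff_reflect, revAt_invol]

lemma znc_reflect_map (N : ℕ) (p : Polynomial ℂ) :
    (reflect N p).map (starRingEnd ℂ) = reflect N (p.map (starRingEnd ℂ)) := by
  ext i; simp [coeff_reflect, coeff_map]

lemma znc_natDegree_reflect_le {N : ℕ} {p : Polynomial ℂ} (h : p.natDegree ≤ N) :
    (reflect N p).natDegree ≤ N := by
  rw [natDegree_le_iff_coeff_eq_zero] at h ⊢
  intro i hi
  rw [coeff_reflect]
  rcases le_or_gt i N with h2 | h2
  · omega
  · show p.coeff (if i ≤ N then N - i else i) = 0; rw [if_neg (by omega)]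
    exact h i hi

lemma znc_natDegree_map_conj (p : Polynomial ℂ) :
    (p.map (starRingEnd ℂ)).natDegree = p.natDegree :=
  natDegree_map_eq_of_injective (RingHom.injective _) p

lemma znc_map_conj_conj (p : Polynomial ℂ) :
    (p.map (starRingEnd ℂ)).map (starRingEnd ℂ) = p := by
  rw [Polynomial.map_map]
  convert Polynomial.map_id
  ext x : 1
  exact Complex.conj_conj x

lemma phi_monic_deg (a : ℕ → ℂ) : ∀ n, (phi a n).Monic ∧ (phi a n).natDegree = n := by
  intro n
  induction n with
  | zero => exact ⟨monic_one, natDegree_one⟩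
  | succ n ih =>
    have hd : (Polynomial.C (a (n + 1)) * revc (phi a n)).natDegree ≤ n := by
      refine le_trans (natDegree_mul_le) ?_
      simp only [natDegree_C, zero_add]
      unfold revc Polynomial.reverse
      rw [show ((phi a n).map (starRingEnd ℂ)).natDegree = n by rw [znc_natDegree_map_conj, ih.2]]
      exact znc_natDegree_reflect_le (le_of_eq (by rw [znc_natDegree_map_conj, ih.2]))
    have hm : (X * phi a n).Monic := (monic_X).mul ih.1
    have hdx : (X * phi a n).natDegree = n + 1 := by
      rw [natDegree_X_mul (ih.1.ne_zero), ih.2]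
    constructor
    · show (X * phi a n + _).Monic
      apply hm.add_of_left
      rw [degree_eq_natDegree hm.ne_zero, hdx]
      calc (Polynomial.C (a (n + 1)) * revc (phi a n)).degree ≤ n := by
            rcases eq_or_ne (Polynomial.C (a (n + 1)) * revc (phi a n)) 0 with h | h
            · simp [h]
            · rw [degree_eq_natDegree h]; exact_mod_cast hd
        _ < (n+1 : ℕ) := by exact_mod_cast Nat.lt_succ_self n
    · show (X * phi a n + _).natDegree = n + 1
      rw [natDegree_add_eq_left_of_natDegree_lt (by omega), hdx]

lemma znc_revc_eq_reflect {a : ℕ → ℂ} {n : ℕ} :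
    revc (phi a n) = reflect n ((phi a n).map (starRingEnd ℂ)) := by
  unfold revc Polynomial.reverse
  rw [znc_natDegree_map_conj, (phi_monic_deg a n).2]

lemma znc_revc_succ (a : ℕ → ℂ) (n : ℕ) :
    revc (phi a (n + 1)) = revc (phi a n) + Polynomial.C ((starRingEnd ℂ) (a (n + 1))) * (X * phi a n) := by
  have hdn := (phi_monic_deg a n).2
  have hmap : ((phi a (n+1)).map (starRingEnd ℂ)) =
      X * ((phi a n).map (starRingEnd ℂ)) + Polynomial.C ((starRingEnd ℂ) (a (n+1))) * reflect n (phi a n) := by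
    show ((X * phi a n + Polynomial.C (a (n + 1)) * revc (phi a n)).map (starRingEnd ℂ)) = _
    rw [Polynomial.map_add, Polynomial.map_mul, Polynomial.map_mul, Polynomial.map_X, map_C]
    congr 1
    rw [znc_revc_eq_reflect, znc_reflect_map, znc_map_conj_conj]
  rw [znc_revc_eq_reflect (n := n+1), hmap, reflect_add]
  congr 1
  · have h2 : reflect (1 + n) ((X : Polynomial ℂ) * ((phi a n).map (starRingEnd ℂ)))
        = reflect 1 X * reflect n ((phi a n).map (starRingEnd ℂ)) :=
      reflect_mul _ _ (natDegree_X_le) (by rw [znc_natDegree_map_conj, hdn])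
    rw [add_comm 1 n] at h2
    rw [h2, reflect_one_X, one_mul, znc_revc_eq_reflect]
  · rw [reflect_C_mul]
    congr 1
    have h2 : reflect (1 + n) ((1 : Polynomial ℂ) * reflect n (phi a n))
        = reflect 1 1 * reflect n (reflect n (phi a n)) :=
      reflect_mul _ _ (by simp) (znc_natDegree_reflect_le (le_of_eq hdn))
    rw [add_comm 1 n, one_mul] at h2
    rw [h2, znc_reflect_reflect]
    congr 1
    rw [show (1 : Polynomial ℂ) = X ^ 0 by simp, reflect_monomial]
    simp [revAt_le]

lemma phi_eval_succ (a : ℕ → ℂ) (k : ℕ) (z : ℂ) :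
    (phi a (k+1)).eval z = z * (phi a k).eval z + a (k+1) * (revc (phi a k)).eval z := by
  show (X * phi a k + Polynomial.C (a (k + 1)) * revc (phi a k)).eval z = _
  simp [eval_add, eval_mul]

lemma revc_eval_succ (a : ℕ → ℂ) (k : ℕ) (z : ℂ) :
    (revc (phi a (k+1))).eval z
      = (revc (phi a k)).eval z + (starRingEnd ℂ) (a (k+1)) * (z * (phi a k).eval z) := by
  rw [znc_revc_succ]; simp [eval_add, eval_mul]

lemma revc_phi_zero (a : ℕ → ℂ) : revc (phi a 0) = 1 := by
  show revc 1 = 1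
  unfold revc Polynomial.reverse
  rw [Polynomial.map_one, natDegree_one, Polynomial.reflect_one, pow_zero]

lemma revc_eval_at_zero (a : ℕ → ℂ) (m : ℕ) : (revc (phi a m)).eval 0 = 1 := by
  rw [← Polynomial.coeff_zero_eq_eval_zero, znc_revc_eq_reflect, coeff_reflect,
    revAt_le (Nat.zero_le m), Nat.sub_zero, Polynomial.coeff_map]
  have h1 := (phi_monic_deg a m).1
  have h2 := (phi_monic_deg a m).2
  rw [show (phi a m).coeff m = 1 by nth_rewrite 2 [← h2]; exact h1.coeff_natDegree]
  simp

lemma phi_eval_zero (a : ℕ → ℂ) (m : ℕ) : (phi a (m+1)).eval 0 = a (m+1) := by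
  rw [phi_eval_succ, revc_eval_at_zero]; ring

end zncAux

lemma sq_le' {A B : ℝ} (h : A^2 ≤ B^2) (hB : 0 ≤ B) : A ≤ B := by
  nlinarith [sq_nonneg (A - B), sq_nonneg (A + B)]

lemma pos_of_sq {A : ℝ} (h : 0 < A^2) (h2 : 0 ≤ A) : 0 < A := by
  rcases eq_or_lt_of_le h2 with h3 | h3
  · rw [← h3] at h; norm_num at h
  · exact h3

lemma real_step_up (r t f g f' g' C μ : ℝ)
    (hf : 0 < f) (hg : 0 ≤ g) (hf' : 0 ≤ f') (hg' : 0 ≤ g')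
    (e1 : f'^2 = r^2*f^2 + t^2*g^2 + C) (e2 : g'^2 = g^2 + t^2*r^2*f^2 + C)
    (hC : |C| ≤ 2*(t*(r*(f*g)))) (ht0 : 0 ≤ t)
    (hr : 1 < r) (hμ : 1 ≤ μ) (hμr : μ < r) (htμ : t*μ < r)
    (hq : 1 < t → t*μ^2 - (r+1)*μ + t*r ≤ 0)
    (hinv : g ≤ μ*f) : 0 < f' ∧ g' ≤ μ*f' := by
  obtain ⟨hC1, hC2⟩ := abs_le.mp hC
  have hgrf : g ≤ r*f := by nlinarith
  have htg : t*g < r*f := by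
    have h1 : t*g ≤ t*(μ*f) := mul_le_mul_of_nonneg_left hinv ht0
    have h2 : t*μ*f < r*f := mul_lt_mul_of_pos_right htμ hf
    nlinarith
  have hsq : 0 ≤ g^2 ∧ g^2 ≤ r^2*f^2 := by
    constructor
    · positivity
    · nlinarith [mul_nonneg hg (mul_nonneg (by linarith : (0:ℝ) ≤ r) hf.le)]
  have hf'pos : 0 < f' := by
    have h2 : 0 < f'^2 := by nlinarith [sq_nonneg (r*f - t*g)]
    exact pos_of_sq h2 hf'
  refine ⟨hf'pos, ?_⟩
  have hrftg : (0:ℝ) < r*f + t*g := by nlinarith [mul_nonneg ht0 hg]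
  rcases le_or_gt t 1 with h1 | h1
  · -- t ≤ 1
    have id1 : f'^2*(g+t*r*f)^2 - g'^2*(r*f+t*g)^2
        = (1-t^2)*(r^2*f^2-g^2)*(2*(t*(r*(f*g)))-C) := by rw [e1, e2]; ring
    have pos1 : 0 ≤ (1-t^2)*(r^2*f^2-g^2)*(2*(t*(r*(f*g)))-C) := by
      apply mul_nonneg (mul_nonneg (by nlinarith) (by linarith [hsq.2])) (by linarith)
    have key2 : (g'*(r*f+t*g))^2 ≤ (f'*(g+t*r*f))^2 := by
      rw [mul_pow, mul_pow]; linarith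
    have hYpos : (0:ℝ) ≤ g + t*r*f := by
      nlinarith [mul_nonneg (mul_nonneg ht0 (by linarith : (0:ℝ) ≤ r)) hf.le]
    have lin : g'*(r*f+t*g) ≤ f'*(g+t*r*f) := sq_le' key2 (mul_nonneg hf' hYpos)
    have lin2 : g + t*r*f ≤ μ*(r*f + t*g) := by
      rcases le_or_gt (μ*t) 1 with h2 | h2
      · nlinarith [mul_nonneg (sub_nonneg.2 hinv) (sub_nonneg.2 h2),
          mul_nonneg (mul_nonneg hf.le (by linarith : (0:ℝ) ≤ 1 - t)) (by linarith : (0:ℝ) ≤ r - 1),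
          mul_nonneg (mul_nonneg hf.le (by linarith : (0:ℝ) ≤ μ - 1))
            (by nlinarith : (0:ℝ) ≤ t*(μ+1) + r - 1)]
      · nlinarith [mul_nonneg hg (by linarith : (0:ℝ) ≤ μ*t - 1),
          mul_nonneg (mul_nonneg (by linarith : (0:ℝ) ≤ r) hf.le) (by linarith : (0:ℝ) ≤ μ - t)]
    have h3 : f'*(g+t*r*f) ≤ f'*(μ*(r*f+t*g)) := mul_le_mul_of_nonneg_left lin2 hf'pos.le
    have h4 : f'*(μ*(r*f+t*g)) = μ*f'*(r*f+t*g) := by ring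
    exact le_of_mul_le_mul_right (by linarith) hrftg
  · -- 1 < t
    have hrftg' : (0:ℝ) < r*f - t*g := by linarith
    have id2 : f'^2*(t*r*f-g)^2 - g'^2*(r*f-t*g)^2
        = (t^2-1)*(r^2*f^2-g^2)*(C+2*(t*(r*(f*g)))) := by rw [e1, e2]; ring
    have pos2 : 0 ≤ (t^2-1)*(r^2*f^2-g^2)*(C+2*(t*(r*(f*g)))) := by
      apply mul_nonneg (mul_nonneg (by nlinarith) (by linarith [hsq.2])) (by linarith)
    have key2 : (g'*(r*f-t*g))^2 ≤ (f'*(t*r*f-g))^2 := by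
      rw [mul_pow, mul_pow]; linarith
    have hYpos : (0:ℝ) ≤ t*r*f - g := by nlinarith
    have lin : g'*(r*f-t*g) ≤ f'*(t*r*f-g) := sq_le' key2 (mul_nonneg hf' hYpos)
    have lin2 : t*r*f - g ≤ μ*(r*f - t*g) := by
      nlinarith [mul_nonneg (sub_nonneg.2 hinv) (by nlinarith : (0:ℝ) ≤ μ*t - 1),
        mul_nonneg hf.le (by nlinarith [hq h1] : (0:ℝ) ≤ -(t*μ^2 - (r+1)*μ + t*r))]
    have h3 : f'*(t*r*f-g) ≤ f'*(μ*(r*f-t*g)) := mul_le_mul_of_nonneg_left lin2 hf'pos.le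
    have h4 : f'*(μ*(r*f-t*g)) = μ*f'*(r*f-t*g) := by ring
    exact le_of_mul_le_mul_right (by linarith) hrftg'

lemma real_step_low (r t f g f' g' C ν : ℝ)
    (hg : 0 < g) (hf : 0 ≤ f) (hf' : 0 ≤ f') (hg' : 0 ≤ g')
    (e1 : f'^2 = r^2*f^2 + t^2*g^2 + C) (e2 : g'^2 = g^2 + t^2*r^2*f^2 + C)
    (hC : |C| ≤ 2*(t*(r*(f*g)))) (ht0 : 0 ≤ t)
    (hr0 : 0 < r) (hr1 : r < 1) (hν : 1 ≤ ν) (hrν : r*ν ≤ 1) (htrν : t*(r*ν) < 1)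
    (hq : 1 < t → t*r*ν^2 - (1+r)*ν + t ≤ 0)
    (hinv : f ≤ ν*g) : 0 < g' ∧ f' ≤ ν*g' := by
  obtain ⟨hC1, hC2⟩ := abs_le.mp hC
  have hrfg : r*f ≤ g := by
    nlinarith [mul_le_mul_of_nonneg_left hinv hr0.le, mul_le_mul_of_nonneg_right hrν hg.le]
  have htrf : t*(r*f) < g := by
    nlinarith [mul_le_mul_of_nonneg_left hinv (mul_nonneg ht0 hr0.le),
      mul_lt_mul_of_pos_right htrν hg]
  have hsq : r^2*f^2 ≤ g^2 := by
    nlinarith [mul_nonneg (mul_nonneg hr0.le hf) hg.le, mul_nonneg (mul_nonneg hr0.le hf) (mul_nonneg hr0.le hf)]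
  have hg'pos : 0 < g' := by
    have h2 : 0 < g'^2 := by nlinarith [sq_nonneg (g - t*r*f)]
    exact pos_of_sq h2 hg'
  refine ⟨hg'pos, ?_⟩
  have hνg : 0 < ν*g := by nlinarith
  rcases le_or_gt t 1 with h1 | h1
  · have id1 : f'^2*(g+t*r*f)^2 - g'^2*(r*f+t*g)^2
        = (1-t^2)*(r^2*f^2-g^2)*(2*(t*(r*(f*g)))-C) := by rw [e1, e2]; ring
    have neg1 : (1-t^2)*(r^2*f^2-g^2)*(2*(t*(r*(f*g)))-C) ≤ 0 := by
      apply mul_nonpos_of_nonpos_of_nonneg ?_ (by linarith)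
      apply mul_nonpos_of_nonneg_of_nonpos (by nlinarith) (by linarith)
    have key2 : (f'*(g+t*r*f))^2 ≤ (g'*(r*f+t*g))^2 := by
      rw [mul_pow, mul_pow]; linarith
    have hXpos : (0:ℝ) ≤ r*f + t*g := by
      nlinarith [mul_nonneg hr0.le hf, mul_nonneg ht0 hg.le]
    have lin : f'*(g+t*r*f) ≤ g'*(r*f+t*g) := sq_le' key2 (mul_nonneg hg' hXpos)
    have lin2 : r*f + t*g ≤ ν*(g + t*r*f) := by
      have idl : ν*g*(ν*(g+t*r*f) - (r*f+t*g))
          = (ν*g-f)*(ν*g-t*g) + f*(t*r*ν^2*g + (1-r)*ν*g - t*g) := by ring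
      have p1 : 0 ≤ (ν*g-f)*(ν*g-t*g) := by
        apply mul_nonneg (by linarith) (by nlinarith)
      have p2 : 0 ≤ f*(t*r*ν^2*g + (1-r)*ν*g - t*g) := by
        apply mul_nonneg hf
        nlinarith [mul_nonneg (mul_nonneg (mul_nonneg ht0 hr0.le) (by nlinarith : (0:ℝ) ≤ ν^2 - 1)) hg.le,
          mul_nonneg (mul_nonneg (by linarith : (0:ℝ) ≤ 1-r) (by linarith : (0:ℝ) ≤ ν - 1)) hg.le,
          mul_nonneg (mul_nonneg (by linarith : (0:ℝ) ≤ 1-t) (by linarith : (0:ℝ) ≤ 1-r)) hg.le]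
      nlinarith [idl, p1, p2, hνg]
    have hpos : (0:ℝ) < g + t*r*f := by
      nlinarith [mul_nonneg (mul_nonneg ht0 hr0.le) hf]
    have h3 : g'*(r*f+t*g) ≤ g'*(ν*(g+t*r*f)) := mul_le_mul_of_nonneg_left lin2 hg'pos.le
    have h4 : g'*(ν*(g+t*r*f)) = ν*g'*(g+t*r*f) := by ring
    exact le_of_mul_le_mul_right (by linarith) hpos
  · have hgtrf : (0:ℝ) < g - t*(r*f) := by linarith
    have id2 : f'^2*(t*r*f-g)^2 - g'^2*(r*f-t*g)^2
        = (t^2-1)*(r^2*f^2-g^2)*(C+2*(t*(r*(f*g)))) := by rw [e1, e2]; ring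
    have neg2 : (t^2-1)*(r^2*f^2-g^2)*(C+2*(t*(r*(f*g)))) ≤ 0 := by
      apply mul_nonpos_of_nonpos_of_nonneg ?_ (by linarith)
      apply mul_nonpos_of_nonneg_of_nonpos (by nlinarith) (by linarith)
    have key2 : (f'*(g-t*r*f))^2 ≤ (g'*(t*g-r*f))^2 := by
      have e3 : (f'*(g-t*r*f))^2 = f'^2*(t*r*f-g)^2 := by ring
      have e4 : (g'*(t*g-r*f))^2 = g'^2*(r*f-t*g)^2 := by ring
      rw [e3, e4]; linarith
    have hXpos : (0:ℝ) ≤ t*g - r*f := by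
      have h2 : 1*g ≤ t*g := mul_le_mul_of_nonneg_right h1.le hg.le
      linarith
    have lin : f'*(g-t*r*f) ≤ g'*(t*g-r*f) := sq_le' key2 (mul_nonneg hg' hXpos)
    have lin2 : t*g - r*f ≤ ν*(g - t*r*f) := by
      nlinarith [mul_nonneg (sub_nonneg.2 hinv) (mul_nonneg hr0.le (by nlinarith : (0:ℝ) ≤ ν*t - 1)),
        mul_nonneg hg.le (by nlinarith [hq h1] : (0:ℝ) ≤ -(t*r*ν^2 - (1+r)*ν + t))]
    have h3 : g'*(t*g-r*f) ≤ g'*(ν*(g-t*r*f)) := mul_le_mul_of_nonneg_left lin2 hg'pos.le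
    have h4 : g'*(ν*(g-t*r*f)) = ν*g'*(g-t*r*f) := by ring
    exact le_of_mul_le_mul_right (by linarith) hgtrf

lemma cstep (z A F G : ℂ) :
    ∃ C : ℝ, (‖z*F + A*G‖)^2
        = (‖z‖)^2*(‖F‖)^2 + (‖A‖)^2*(‖G‖)^2 + C ∧
      (‖G + (starRingEnd ℂ) A * (z*F)‖)^2
        = (‖G‖)^2 + (‖A‖)^2*(‖z‖)^2*(‖F‖)^2 + C ∧
      |C| ≤ 2*((‖A‖)*((‖z‖)*((‖F‖)*(‖G‖)))) := by
  refine ⟨2 * ((z*F) * (starRingEnd ℂ) (A*G)).re, ?_, ?_, ?_⟩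
  · rw [Complex.sq_norm, Complex.normSq_add, Complex.normSq_mul, Complex.normSq_mul,
      ← Complex.sq_norm, ← Complex.sq_norm, ← Complex.sq_norm, ← Complex.sq_norm]
  · rw [Complex.sq_norm, Complex.normSq_add, Complex.normSq_mul, Complex.normSq_mul,
      Complex.normSq_conj, ← Complex.sq_norm, ← Complex.sq_norm, ← Complex.sq_norm, ← Complex.sq_norm]
    have h : G * (starRingEnd ℂ) ((starRingEnd ℂ) A * (z*F)) = (starRingEnd ℂ) ((z*F) * (starRingEnd ℂ) (A*G)) := by
      simp only [map_mul, Complex.conj_conj]; ring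
    rw [h, Complex.conj_re]; ring
  · have h1 : |2 * ((z*F) * (starRingEnd ℂ) (A*G)).re| ≤ 2 * ‖(z*F) * (starRingEnd ℂ) (A*G)‖ := by
      rw [abs_mul, show |(2:ℝ)| = 2 by norm_num]
      exact mul_le_mul_of_nonneg_left (Complex.abs_re_le_norm _) (by norm_num)
    have h2 : ‖(z*F) * (starRingEnd ℂ) (A*G)‖ =
        ‖A‖ * (‖z‖ * (‖F‖ * ‖G‖)) := by
      rw [norm_mul, norm_mul, Complex.norm_conj, norm_mul]; ring
    rw [h2] at h1; exact h1

section zncMain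

lemma znc_delta_facts (ε : ℝ) (hε : 0 < ε) :
    let d := Real.sqrt (1 + ε ^ 2 / (4 * (1 + ε))) - 1
    0 < d ∧ (1+d)^2 * (4*(1+ε)) = 4*(1+ε) + ε^2 ∧ 2*d + d^2 ≤ ε := by
  intro d
  have h1 : (1:ℝ) + d = Real.sqrt (1 + ε ^ 2 / (4 * (1 + ε))) := by show _ = _; ring
  have h1d : (0:ℝ) ≤ 1 + d := by rw [h1]; exact Real.sqrt_nonneg _
  have hsq : (1+d)^2 = 1 + ε^2/(4*(1+ε)) := by
    rw [h1, Real.sq_sqrt (by positivity)]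
  have hpos : 0 < ε^2/(4*(1+ε)) := by positivity
  have hd0 : 0 < d := by
    have h2 : (1:ℝ) < Real.sqrt (1 + ε ^ 2 / (4 * (1 + ε))) :=
      (Real.lt_sqrt (by norm_num)).mpr (by nlinarith)
    rw [← h1] at h2
    linarith
  have hK : (1+d)^2 * (4*(1+ε)) = 4*(1+ε) + ε^2 := by
    rw [hsq]; field_simp
  refine ⟨hd0, hK, ?_⟩
  nlinarith [hK]

lemma znc_no_zero_outer (ε : ℝ) (hε : 0 < ε) (n : ℕ) (hn : 1 ≤ n) (a : ℕ → ℂ)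
    (ha : ∀ j, 1 ≤ j → j ≤ n →
      |‖a j‖ - 1| < Real.sqrt (1 + ε ^ 2 / (4 * (1 + ε))) - 1)
    (z : ℂ) (hz : 1 + ε ≤ ‖z‖) :
    (phi a n).eval z ≠ 0 := by
  obtain ⟨hd0, hK, hd2⟩ := znc_delta_facts ε hε
  set d := Real.sqrt (1 + ε ^ 2 / (4 * (1 + ε))) - 1 with hddef
  set r := ‖z‖ with hrdef
  have hr1 : 1 < r := by nlinarith
  have hne : (Finset.Icc 1 n).Nonempty := ⟨1, by simp [Finset.mem_Icc]; omega⟩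
  set T := (Finset.Icc 1 n).sup' hne (fun j => ‖a j‖) with hTdef
  have hTle : T < 1 + d := by
    rw [hTdef, Finset.sup'_lt_iff]
    intro j hj
    rw [Finset.mem_Icc] at hj
    have h2 := abs_lt.mp (ha j hj.1 hj.2)
    linarith [h2.2]
  have hT0 : 0 ≤ T :=
    le_trans (norm_nonneg (a 1))
      (Finset.le_sup' (f := fun j => ‖a j‖) (Finset.mem_Icc.mpr ⟨le_refl 1, hn⟩))
  have hT2 : T^2 ≤ (1+d)^2 := by nlinarith
  have hdisc : 4*T^2*r ≤ (r+1)^2 := by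
    have key : 4*(1+d)^2*r*(1+ε) ≤ (r+1)^2*(1+ε) := by
      nlinarith [hK, mul_nonneg (by linarith : (0:ℝ) ≤ r - (1+ε))
        (by nlinarith : (0:ℝ) ≤ (1+ε)*r - 1)]
    have key2 : 4*(1+d)^2*r ≤ (r+1)^2 := by nlinarith [key]
    nlinarith [mul_le_mul_of_nonneg_right hT2 (by linarith : (0:ℝ) ≤ r)]
  set μ := if T ≤ 1 then (1:ℝ) else (r+1)/(2*T) with hμdef
  have hμ1 : 1 ≤ μ := by
    rw [hμdef]; split_ifs with h
    · exact le_refl 1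
    · rw [le_div_iff₀ (by linarith)]
      nlinarith
  have hμr : μ < r := by
    rw [hμdef]; split_ifs with h
    · exact hr1
    · rw [div_lt_iff₀ (by linarith)]
      nlinarith
  have hTμ : T*μ < r := by
    rw [hμdef]; split_ifs with h
    · nlinarith
    · push_neg at h
      have hTne : T ≠ 0 := ne_of_gt (by linarith)
      rw [show T*((r+1)/(2*T)) = (r+1)/2 by field_simp]
      rw [div_lt_iff₀ (by norm_num)]
      nlinarith
  have hq : ∀ t : ℝ, t ≤ T → 1 < t → t*μ^2 - (r+1)*μ + t*r ≤ 0 := by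
    intro t htT ht1
    have hT1 : 1 < T := lt_of_lt_of_le ht1 htT
    have hμeq : μ*(2*T) = r+1 := by
      rw [hμdef, if_neg (by linarith)]; field_simp
    have expand : (4*T^2) * (t*μ^2 - (r+1)*μ + t*r)
        = t*(μ*(2*T))^2 - 2*T*(r+1)*(μ*(2*T)) + 4*T^2*t*r := by ring
    rw [hμeq] at expand
    nlinarith [expand,
      mul_nonneg (by linarith : (0:ℝ) ≤ 2*T - t) (by linarith : (0:ℝ) ≤ (r+1)^2 - 4*T^2*r),
      mul_nonneg (mul_nonneg (by linarith : (0:ℝ) ≤ T - t)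
        (by nlinarith : (0:ℝ) ≤ T^2)) (by linarith : (0:ℝ) ≤ r),
      mul_pos (by nlinarith : (0:ℝ) < 4*T^2) (by nlinarith : (0:ℝ) < T)]
  have inv : ∀ k, k ≤ n → 0 < ‖(phi a k).eval z‖ ∧
      ‖(revc (phi a k)).eval z‖ ≤ μ * ‖(phi a k).eval z‖ := by
    intro k
    induction k with
    | zero =>
      intro _
      constructor
      · show (0:ℝ) < ‖(1 : Polynomial ℂ).eval z‖
        simp
      · rw [revc_phi_zero]
        show ‖(1:Polynomial ℂ).eval z‖ ≤ μ * ‖(1 : Polynomial ℂ).eval z‖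
        simp; linarith
    | succ k ih =>
      intro hk
      obtain ⟨hfk, hgk⟩ := ih (by omega)
      obtain ⟨C, e1, e2, hC⟩ := cstep z (a (k+1)) ((phi a k).eval z) ((revc (phi a k)).eval z)
      have htT : ‖a (k+1)‖ ≤ T :=
        Finset.le_sup' (f := fun j => ‖a j‖) (Finset.mem_Icc.mpr ⟨by omega, hk⟩)
      have htμ : ‖a (k+1)‖ * μ < r := by
        have : ‖a (k+1)‖ * μ ≤ T * μ :=
          mul_le_mul_of_nonneg_right htT (by linarith)
        linarith
    
      exact real_step_up r (‖a (k+1)‖) (‖(phi a k).eval z‖)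
        (‖(revc (phi a k)).eval z‖) (‖(phi a (k+1)).eval z‖)
        (‖(revc (phi a (k+1))).eval z‖) C μ hfk (norm_nonneg _)
        (norm_nonneg _) (norm_nonneg _)
        (by rw [phi_eval_succ]; exact e1) (by rw [revc_eval_succ]; exact e2) hC
        (norm_nonneg _) hr1 hμ1 hμr htμ (fun h1 => hq _ htT h1) hgk
  have hfin := (inv n le_rfl).1
  intro h0
  rw [h0] at hfin
  simp at hfin

end zncMain

section zncLow

lemma znc_no_zero_inner (ε : ℝ) (hε : 0 < ε) (n : ℕ) (hn : 1 ≤ n) (a : ℕ → ℂ)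
    (ha : ∀ j, 1 ≤ j → j ≤ n →
      |‖a j‖ - 1| < Real.sqrt (1 + ε ^ 2 / (4 * (1 + ε))) - 1)
    (z : ℂ) (hz0 : z ≠ 0) (hz : ‖z‖ ≤ 1 - ε) :
    (phi a n).eval z ≠ 0 := by
  obtain ⟨hd0, hK, hd2⟩ := znc_delta_facts ε hε
  set d := Real.sqrt (1 + ε ^ 2 / (4 * (1 + ε))) - 1 with hddef
  set r := ‖z‖ with hrdef
  have hr0 : 0 < r := norm_pos_iff.mpr hz0
  have hε1 : ε < 1 := by nlinarith
  have hd8 : 8*d*(1+ε) ≤ ε^2 := by nlinarith [hK, hd0]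
  have hd8' : 8*d ≤ ε := by nlinarith [hd8]
  have hr1 : r < 1 := by linarith
  have hne : (Finset.Icc 1 n).Nonempty := ⟨1, by simp [Finset.mem_Icc]; omega⟩
  set T := (Finset.Icc 1 n).sup' hne (fun j => ‖a j‖) with hTdef
  have hTle : T < 1 + d := by
    rw [hTdef, Finset.sup'_lt_iff]
    intro j hj
    rw [Finset.mem_Icc] at hj
    have h2 := abs_lt.mp (ha j hj.1 hj.2)
    linarith [h2.2]
  have hTge : 1 - d < T := by
    have h2 := abs_lt.mp (ha 1 le_rfl hn)
    have h3 : ‖a 1‖ ≤ T :=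
      Finset.le_sup' (f := fun j => ‖a j‖) (Finset.mem_Icc.mpr ⟨le_refl 1, hn⟩)
    linarith [h2.1]
  have hT0 : 0 < T := by linarith
  have hT2 : T^2 ≤ (1+d)^2 := by nlinarith
  have hdisc : 4*T^2*r ≤ (1+r)^2 := by
    have key : 4*(1+d)^2*r*(1+ε) ≤ (1+r)^2*(1+ε) := by
      nlinarith [hK, mul_nonneg (by linarith : (0:ℝ) ≤ (1+ε) - r)
        (by nlinarith : (0:ℝ) ≤ 1 - (1+ε)*r)]
    have key2 : 4*(1+d)^2*r ≤ (1+r)^2 := by nlinarith [key]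
    nlinarith [mul_le_mul_of_nonneg_right hT2 (by linarith : (0:ℝ) ≤ r)]
  set ν := if T ≤ 1 then (1:ℝ) else (1+r)/(2*T*r) with hνdef
  have hν1 : 1 ≤ ν := by
    rw [hνdef]; split_ifs with h
    · exact le_refl 1
    · rw [le_div_iff₀ (by positivity)]
      have h2 : T*r < (1+d)*r := mul_lt_mul_of_pos_right hTle hr0
      have h3 : d*r ≤ d*(1-ε) := mul_le_mul_of_nonneg_left hz hd0.le
      nlinarith
  have hrν : r*ν ≤ 1-d := by
    rw [hνdef]; split_ifs with h
    · nlinarith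
    · push_neg at h
      have hTne : T ≠ 0 := ne_of_gt (by linarith)
      have hrne : r ≠ 0 := ne_of_gt hr0
      rw [show r*((1+r)/(2*T*r)) = (1+r)/(2*T) by field_simp]
      rw [div_le_iff₀ (by linarith)]
      nlinarith
  have hq : ∀ t : ℝ, t ≤ T → 1 < t → t*r*ν^2 - (1+r)*ν + t ≤ 0 := by
    intro t htT ht1
    have hT1 : 1 < T := lt_of_lt_of_le ht1 htT
    have hνeq : ν*(2*T*r) = 1+r := by
      rw [hνdef, if_neg (by linarith)]; field_simp
    have expand : (4*T^2*r) * (t*r*ν^2 - (1+r)*ν + t)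
        = t*(ν*(2*T*r))^2 - 2*T*(1+r)*(ν*(2*T*r)) + 4*T^2*r*t := by ring
    rw [hνeq] at expand
    nlinarith [expand,
      mul_nonneg (by linarith : (0:ℝ) ≤ 2*T - t) (by linarith : (0:ℝ) ≤ (1+r)^2 - 4*T^2*r),
      mul_nonneg (mul_nonneg (by linarith : (0:ℝ) ≤ T - t)
        (by nlinarith : (0:ℝ) ≤ T^2)) (by linarith : (0:ℝ) ≤ r),
      mul_pos (by nlinarith : (0:ℝ) < 4*T^2*r) (by nlinarith : (0:ℝ) < T)]
  have inv : ∀ k, k ≤ n → 0 < ‖(revc (phi a k)).eval z‖ ∧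
      ‖(phi a k).eval z‖ ≤ ν * ‖(revc (phi a k)).eval z‖ := by
    intro k
    induction k with
    | zero =>
      intro _
      rw [revc_phi_zero]
      constructor
      · show (0:ℝ) < ‖(1 : Polynomial ℂ).eval z‖
        simp
      · show ‖(1:Polynomial ℂ).eval z‖ ≤ ν * ‖(1 : Polynomial ℂ).eval z‖
        simp; linarith
    | succ k ih =>
      intro hk
      obtain ⟨hgk, hfk⟩ := ih (by omega)
      obtain ⟨C, e1, e2, hC⟩ := cstep z (a (k+1)) ((phi a k).eval z) ((revc (phi a k)).eval z)
      have htT : ‖a (k+1)‖ ≤ T :=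
        Finset.le_sup' (f := fun j => ‖a j‖) (Finset.mem_Icc.mpr ⟨by omega, hk⟩)
      have htb := abs_lt.mp (ha (k+1) (by omega) hk)
      have htrν : ‖a (k+1)‖ * (r*ν) < 1 := by
        have h2 : ‖a (k+1)‖ * (r*ν) ≤ ‖a (k+1)‖ * (1-d) :=
          mul_le_mul_of_nonneg_left hrν (norm_nonneg _)
        have h3 : ‖a (k+1)‖ * (1-d) < (1+d)*(1-d) := by
          apply mul_lt_mul_of_pos_right (by linarith [htb.2]) (by nlinarith)
        nlinarith
      have hsw := real_step_low r (‖a (k+1)‖) (‖(phi a k).eval z‖)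
        (‖(revc (phi a k)).eval z‖) (‖(phi a (k+1)).eval z‖)
        (‖(revc (phi a (k+1))).eval z‖) C ν hgk (norm_nonneg _)
        (norm_nonneg _) (norm_nonneg _)
        (by rw [phi_eval_succ]; exact e1) (by rw [revc_eval_succ]; exact e2) hC
        (norm_nonneg _) hr0 hr1 hν1 (by linarith [hd0] : r*ν ≤ 1) htrν
        (fun h1 => hq _ htT h1) hfk
      exact hsw
  intro h0
  obtain ⟨m, rfl⟩ : ∃ m, n = m + 1 := ⟨n-1, by omega⟩
  obtain ⟨hgm, hfm⟩ := inv m (by omega)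
  rw [phi_eval_succ] at h0
  have hzF : z * (phi a m).eval z = -(a (m+1) * (revc (phi a m)).eval z) := by
    linear_combination h0
  have habs : r * ‖(phi a m).eval z‖
      = ‖a (m+1)‖ * ‖(revc (phi a m)).eval z‖ := by
    have := congrArg (‖·‖) hzF
    rwa [norm_mul, norm_neg, norm_mul] at this
  have htb := abs_lt.mp (ha (m+1) (by omega) le_rfl)
  have h2 : r * ‖(phi a m).eval z‖ ≤ r * (ν * ‖(revc (phi a m)).eval z‖) :=
    mul_le_mul_of_nonneg_left hfm hr0.le
  have h3 : (r * ν) * ‖(revc (phi a m)).eval z‖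
      ≤ (1-d) * ‖(revc (phi a m)).eval z‖ :=
    mul_le_mul_of_nonneg_right hrν (norm_nonneg _)
  have h4 : (1-d) * ‖(revc (phi a m)).eval z‖
      < ‖a (m+1)‖ * ‖(revc (phi a m)).eval z‖ :=
    mul_lt_mul_of_pos_right (by linarith [htb.1]) hgm
  nlinarith [habs, h2, h3, h4]

end zncLow

/-- Theorem 4.2: for ε > 0 and δ := √(1 + ε²/(4(1+ε))) − 1, we have
δ > 0 and: whenever the Schur parameters a₁,…,a_n satisfy ||a_j| − 1| < δ, every zero z
of φ_n satisfies ||z| − 1| < ε. -/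
theorem zeros_near_circle (ε : ℝ) (hε : 0 < ε) :
    0 < Real.sqrt (1 + ε ^ 2 / (4 * (1 + ε))) - 1 ∧
    ∀ (n : ℕ), 1 ≤ n → ∀ a : ℕ → ℂ,
      (∀ j, 1 ≤ j → j ≤ n → ‖a j‖ ≠ 1) →
      (∀ j, 1 ≤ j → j ≤ n →
        |‖a j‖ - 1| < Real.sqrt (1 + ε ^ 2 / (4 * (1 + ε))) - 1) →
      ∀ z : ℂ, (phi a n).eval z = 0 → |‖z‖ - 1| < ε := by
  obtain ⟨hd0, hK, hd2⟩ := znc_delta_facts ε hε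
  refine ⟨hd0, ?_⟩
  intro n hn a _ hδa z hz
  rw [abs_sub_lt_iff]
  constructor
  · by_contra h
    push_neg at h
    exact znc_no_zero_outer ε hε n hn a hδa z (by linarith) hz
  · by_contra h
    push_neg at h
    rcases eq_or_ne z 0 with rfl | hz0
    · obtain ⟨m, rfl⟩ : ∃ m, n = m + 1 := ⟨n-1, by omega⟩
      rw [phi_eval_zero] at hz
      have h1 := hδa (m+1) (by omega) le_rfl
      rw [hz] at h1
      simp only [norm_zero, map_zero, zero_sub, abs_neg, abs_one] at h1
      have habs : ‖(0:ℂ)‖ = 0 := by simp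
      rw [habs] at h
      nlinarith [h1, hd2]
    · exact znc_no_zero_inner ε hε n hn a hδa z hz0 (by linarith) hz
end
end
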